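/- arXiv:1703.04339 — 4 statements merged into one kernel-verified Lean document; each statement's English description precedes it below -/
import Mathlib

section
/- Let (Y_i, g_i^{i+1}) be an inverse sequence of compact metrizable spaces with limit Y and limit projections g_{j,∞} : Y → Y_j. Let E be a real Banach space, U ⊆ E an open set, P ⊆ U a subset with a continuous retraction r : U → P (r restricted to P is the identity), with P given the metric d induced from E. Let μ : Y → P be a continuous map and ε > 0. Then there exists i ∈ ℕ such that for all j ≥ i there is a continuous map f : Y_j → P with d(f(g_{j,∞}(y)), μ(y)) < ε for every y ∈ Y. -/
open Filter Set Uniformity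

namespace ApproxFactAux

variable {Y : ℕ → Type*}

noncomputable def ext (g : ∀ i, Y (i+1) → Y i) (p : ∀ i, Y i) : ∀ j, Y j → ∀ m, Y m
  | 0, z => fun m => Nat.casesOn m z fun n => p (n+1)
  | (j+1), z => fun m =>
      if h : m = j + 1 then cast (congrArg Y h.symm) z else ext g p j (g j z) m

lemma ext_succ (g : ∀ i, Y (i+1) → Y i) (p : ∀ i, Y i) (j : ℕ) (z : Y (j+1)) (m : ℕ) :
    ext g p (j+1) z m =
      if h : m = j + 1 then cast (congrArg Y h.symm) z else ext g p j (g j z) m := rfl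

lemma ext_top (g : ∀ i, Y (i+1) → Y i) (p : ∀ i, Y i) : ∀ j (z : Y j), ext g p j z j = z
  | 0, z => rfl
  | (j+1), z => by rw [ext_succ, dif_pos rfl]; exact cast_eq _ z

lemma ext_thread (g : ∀ i, Y (i+1) → Y i) (p : ∀ i, Y i) (y : ∀ i, Y i)
    (hy : ∀ i, g i (y (i+1)) = y i) : ∀ j m, m ≤ j → ext g p j (y j) m = y m
  | 0, 0, _ => rfl
  | 0, (m+1), hm => absurd hm (Nat.not_succ_le_zero m)
  | (j+1), m, hm => by
      rw [ext_succ]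
      rcases eq_or_lt_of_le hm with h | h
      · rw [dif_pos h]; subst h; rfl
      · rw [dif_neg (by omega), hy j]
        exact ext_thread g p y hy j m (by omega)

lemma ext_chain (g : ∀ i, Y (i+1) → Y i) (p : ∀ i, Y i) :
    ∀ j (z : Y j) m, m + 1 ≤ j → g m (ext g p j z (m+1)) = ext g p j z m
  | 0, _, m, hm => absurd hm (Nat.not_succ_le_zero m)
  | (j+1), z, m, hm => by
      rcases eq_or_lt_of_le hm with h | h
      · have hm' : m = j := by omega
        subst hm'
        rw [ext_top, ext_succ, dif_neg (by omega), ext_top]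
      · rw [ext_succ g p j z (m+1), dif_neg (by omega), ext_succ g p j z m,
          dif_neg (by omega)]
        exact ext_chain g p j (g j z) m (by omega)

lemma continuous_cast' [∀ i, TopologicalSpace (Y i)] {a b : ℕ} (h : a = b) :
    Continuous (fun z : Y a => cast (congrArg Y h) z) := by
  subst h; exact continuous_id

lemma ext_continuous [∀ i, TopologicalSpace (Y i)] (g : ∀ i, Y (i+1) → Y i)
    (hg : ∀ i, Continuous (g i)) (p : ∀ i, Y i) : ∀ j, Continuous (ext g p j)
  | 0 => by
      refine continuous_pi fun m => ?_
      cases m with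
      | zero => exact continuous_id
      | succ n => exact continuous_const
  | (j+1) => by
      refine continuous_pi fun m => ?_
      by_cases h : m = j + 1
      · simp only [ext_succ, dif_pos h]
        exact continuous_cast' h.symm
      · simp only [ext_succ, dif_neg h]
        exact ((continuous_apply m).comp (ext_continuous g hg p j)).comp (hg j)

end ApproxFactAux

/-- a version of (R1) of Mardešić–Segal.  Let `(Y_i, g_i^{i+1})` be an
inverse sequence of compact metrizable spaces with limit `Y`, let `P` be a retract of an open
subset `U` of a Banach space `E` (so `P` is an ANR), with the metric induced from `E`.
For every continuous `μ : Y → P` and every `ε > 0` there is an `i` such that for every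
`j ≥ i` (i.e. `j = i + k`) there is a continuous map `f : Y_j → P` with
`dist (f (g_{j,∞} y)) (μ y) < ε` for all `y ∈ Y`. -/
theorem approx_factorization_through_term
    (Y : ℕ → Type*) [∀ i, TopologicalSpace (Y i)] [∀ i, CompactSpace (Y i)]
    [∀ i, TopologicalSpace.MetrizableSpace (Y i)]
    (g : ∀ i, Y (i + 1) → Y i) (hg : ∀ i, Continuous (g i))
    {E : Type*} [NormedAddCommGroup E] [NormedSpace ℝ E] [CompleteSpace E]
    (U : Set E) (hU : IsOpen U) (P : Set E) (hPU : P ⊆ U)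
    (r : U → E) (hr : Continuous r) (hrP : ∀ u, r u ∈ P)
    (hret : ∀ u : U, (u : E) ∈ P → r u = u)
    (μ : {y : ∀ i, Y i // ∀ i, g i (y (i + 1)) = y i} → E)
    (hμc : Continuous μ) (hμP : ∀ y, μ y ∈ P)
    (ε : ℝ) (hε : 0 < ε) :
    ∃ i : ℕ, ∀ k : ℕ, ∃ f : Y (i + k) → E, Continuous f ∧ (∀ z, f z ∈ P) ∧
      ∀ y : {y : ∀ i, Y i // ∀ i, g i (y (i + 1)) = y i},
        dist (f (y.1 (i + k))) (μ y) < ε := by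
  classical
  by_cases hne : ∀ i, Nonempty (Y i)
  case neg =>
    push_neg at hne
    obtain ⟨i0, hi0⟩ := hne
    refine ⟨i0, fun k => ?_⟩
    have hempty : IsEmpty (Y (i0 + k)) := by
      induction k with
      | zero => exact hi0
      | succ n ih => exact ⟨fun z => ih.false (g (i0 + n) z)⟩
    refine ⟨fun z => hempty.elim z, ⟨fun s _ => ?_⟩, fun z => hempty.elim z,
      fun y => hempty.elim (y.1 (i0 + k))⟩
    rw [Set.eq_empty_of_isEmpty ((fun z => hempty.elim z) ⁻¹' s)]
    exact isOpen_empty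
  case pos =>
  letI : ∀ i, MetricSpace (Y i) := fun i => TopologicalSpace.metrizableSpaceMetric (Y i)
  set S : Set (∀ i, Y i) := {x | ∀ i, g i (x (i + 1)) = x i} with hS
  have hSclosed : IsClosed S := by
    have h : S = ⋂ i, {x : ∀ i, Y i | g i (x (i + 1)) = x i} := by
      ext x; simp [hS, Set.mem_iInter]
    rw [h]
    exact isClosed_iInter fun i =>
      isClosed_eq ((hg i).comp (continuous_apply (i + 1))) (continuous_apply i)
  haveI : CompactSpace {y : ∀ i, Y i // ∀ i, g i (y (i + 1)) = y i} :=
    isCompact_iff_compactSpace.mp hSclosed.isCompact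
  -- sets of partial threads
  set T : ℕ → Set (∀ i, Y i) :=
    fun n => ⋂ m ∈ Finset.range n, {x : ∀ i, Y i | g m (x (m + 1)) = x m} with hT
  have hTclosed : ∀ n, IsClosed (T n) := fun n =>
    isClosed_biInter fun m _ =>
      isClosed_eq ((hg m).comp (continuous_apply (m + 1))) (continuous_apply m)
  have hTcpt : ∀ n, IsCompact (T n) := fun n => (hTclosed n).isCompact
  have hTanti : ∀ {a b : ℕ}, a ≤ b → T b ⊆ T a := by
    intro a b hab x hx
    simp only [hT, Set.mem_iInter] at hx ⊢
    intro m hm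
    exact hx m (Finset.mem_range.mpr (lt_of_lt_of_le (Finset.mem_range.mp hm) hab))
  have hST : ∀ n, S ⊆ T n := by
    intro n x hx
    simp only [hT, Set.mem_iInter]
    intro m _
    exact hx m
  set p : ∀ i, Y i := fun i => (hne i).some with hp
  have hextT : ∀ j (z : Y j) n, n ≤ j → ApproxFactAux.ext g p j z ∈ T n := by
    intro j z n hn
    simp only [hT, Set.mem_iInter]
    intro m hm
    have hmn := Finset.mem_range.mp hm
    exact ApproxFactAux.ext_chain g p j z m (by omega)
  -- the limit is nonempty
  have hTne : ∀ n, (T n).Nonempty := fun n =>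
    ⟨ApproxFactAux.ext g p n (p n), hextT n (p n) n le_rfl⟩
  have hdir : Directed (· ⊇ ·) T := fun a b =>
    ⟨max a b, hTanti (le_max_left a b), hTanti (le_max_right a b)⟩
  obtain ⟨x0, hx0⟩ := IsCompact.nonempty_iInter_of_directed_nonempty_isCompact_isClosed T
    hdir hTne hTcpt hTclosed
  have hx0S : x0 ∈ S := by
    intro i
    have h1 := Set.mem_iInter.mp hx0 (i + 1)
    simp only [hT, Set.mem_iInter] at h1
    exact h1 i (Finset.mem_range.mpr (Nat.lt_succ_self i))
  set y0 : {y : ∀ i, Y i // ∀ i, g i (y (i + 1)) = y i} := ⟨x0, hx0S⟩ with hy0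
  -- the compact range of μ
  set C : Set E := Set.range μ with hC
  have hCcpt : IsCompact C := isCompact_range hμc
  have hCne : C.Nonempty := ⟨μ y0, Set.mem_range_self y0⟩
  have hCP : C ⊆ P := by rintro v ⟨y, rfl⟩; exact hμP y
  have hCU : C ⊆ U := fun v hv => hPU (hCP hv)
  -- a safety margin around C inside U
  obtain ⟨δ₀, hδ₀pos, hδ₀⟩ := hCcpt.exists_thickening_subset_open hU hCU
  have hδ₀U : ∀ v c, c ∈ C → dist v c < δ₀ → v ∈ U := fun v c hc h =>
    hδ₀ (Metric.mem_thickening_iff.mpr ⟨c, hc, h⟩)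
  -- uniform continuity of the retraction near C
  have key : ∀ c ∈ C, ∃ δ, 0 < δ ∧ δ ≤ ε / 4 ∧
      ∀ v (hv : v ∈ U), dist v c < δ → dist (r ⟨v, hv⟩) c < ε / 4 := by
    intro c hc
    have hcU : c ∈ U := hCU hc
    have hcont : ContinuousAt r ⟨c, hcU⟩ := hr.continuousAt
    obtain ⟨δ, hδpos, hδ⟩ := Metric.continuousAt_iff.mp hcont (ε / 4) (by positivity)
    refine ⟨min δ (ε / 4), lt_min hδpos (by positivity), min_le_right _ _, ?_⟩
    intro v hv hvc
    have h1 : dist (⟨v, hv⟩ : U) ⟨c, hcU⟩ < δ := by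
      rw [Subtype.dist_eq]
      exact lt_of_lt_of_le hvc (min_le_left _ _)
    calc dist (r ⟨v, hv⟩) c = dist (r ⟨v, hv⟩) (r ⟨c, hcU⟩) := by
          rw [hret ⟨c, hcU⟩ (hCP hc)]
      _ < ε / 4 := hδ h1
  choose! δf hδfpos hδfle hδf using key
  have hcov : C ⊆ ⋃ c ∈ C, Metric.ball c (δf c / 2) := by
    intro c hc
    exact Set.mem_biUnion hc (Metric.mem_ball_self (half_pos (hδfpos c hc)))
  obtain ⟨t, htsub, htfin, htcov⟩ :=
    hCcpt.elim_finite_subcover_image (fun c _ => Metric.isOpen_ball) hcov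
  have htne : (htfin.toFinset).Nonempty := by
    obtain ⟨c, hc⟩ := hCne
    obtain ⟨c', hc', _⟩ := Set.mem_iUnion₂.mp (htcov hc)
    exact ⟨c', htfin.mem_toFinset.mpr hc'⟩
  set δ₁ : ℝ := min δ₀ (htfin.toFinset.inf' htne fun c => δf c / 2) with hδ₁def
  have hδ₁pos : 0 < δ₁ := by
    refine lt_min hδ₀pos ?_
    rw [Finset.lt_inf'_iff]
    intro c hc
    exact half_pos (hδfpos c (htsub (htfin.mem_toFinset.mp hc)))
  have hδ₁U : ∀ v c, c ∈ C → dist v c < δ₁ → v ∈ U := fun v c hc h =>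
    hδ₀U v c hc (lt_of_lt_of_le h (min_le_left _ _))
  have hδ₁r : ∀ v c, c ∈ C → dist v c < δ₁ → ∀ (hv : v ∈ U),
      dist (r ⟨v, hv⟩) c < ε / 2 := by
    intro v c hc h hv
    obtain ⟨c', hc', hcc'⟩ := Set.mem_iUnion₂.mp (htcov hc)
    have hc'C : c' ∈ C := htsub hc'
    have hballc : dist c c' < δf c' / 2 := Metric.mem_ball.mp hcc'
    have hδ₁le : δ₁ ≤ δf c' / 2 :=
      le_trans (min_le_right _ _) (Finset.inf'_le _ (htfin.mem_toFinset.mpr hc'))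
    have h1 : dist v c' < δf c' := by
      calc dist v c' ≤ dist v c + dist c c' := dist_triangle _ _ _
        _ < δ₁ + δf c' / 2 := by linarith
        _ ≤ δf c' := by linarith
    have h2 := hδf c' hc'C v hv h1
    have h3 : δf c' ≤ ε / 4 := hδfle c' hc'C
    calc dist (r ⟨v, hv⟩) c ≤ dist (r ⟨v, hv⟩) c' + dist c' c := dist_triangle _ _ _
      _ < ε / 4 + δf c' / 2 := by rw [dist_comm c' c]; linarith
      _ < ε / 2 := by linarith
  -- a finite ε'-net of C and the partition of unity
  set ε' : ℝ := δ₁ / 2 with hε'def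
  have hε'pos : 0 < ε' := half_pos hδ₁pos
  obtain ⟨t₂, ht₂sub, ht₂fin, ht₂cov⟩ := hCcpt.finite_cover_balls hε'pos
  set tF := ht₂fin.toFinset with htF
  set F : Submodule ℝ E := Submodule.span ℝ t₂ with hF
  haveI : FiniteDimensional ℝ F := FiniteDimensional.span_of_finite ℝ ht₂fin
  set φ : E → E → ℝ := fun c v => max (ε' - dist v c) 0 with hφ
  have hφcont : ∀ c, Continuous (φ c) := fun c =>
    (continuous_const.sub (continuous_id.dist continuous_const)).max continuous_const
  have hφnonneg : ∀ c v, 0 ≤ φ c v := fun c v => le_max_right _ _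
  have hφpos_iff : ∀ c v, 0 < φ c v ↔ dist v c < ε' := by
    intro c v
    simp [hφ, lt_max_iff, sub_pos]
  set ψ : E → ℝ := fun v => ∑ c ∈ tF, φ c v with hψ
  have hψcont : Continuous ψ := continuous_finset_sum _ fun c _ => hφcont c
  have hψposC : ∀ v ∈ C, 0 < ψ v := by
    intro v hv
    obtain ⟨c, hc, hvc⟩ := Set.mem_iUnion₂.mp (ht₂cov hv)
    refine Finset.sum_pos' (fun c _ => hφnonneg c v)
      ⟨c, ht₂fin.mem_toFinset.mpr hc, ?_⟩
    exact (hφpos_iff c v).mpr (Metric.mem_ball.mp hvc)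
  set A : E → F := fun v => (ψ v)⁻¹ • ∑ c ∈ tF.attach,
      φ c.1 v • (⟨c.1, Submodule.subset_span (ht₂fin.mem_toFinset.mp c.2)⟩ : F) with hA
  have hAcont : ContinuousOn A {v | 0 < ψ v} := by
    refine ContinuousOn.smul ((hψcont.continuousOn).inv₀ fun v hv => ne_of_gt hv) ?_
    exact (continuous_finset_sum _ fun c _ => (hφcont c.1).smul continuous_const).continuousOn
  have hAcoe : ∀ v, (A v : E) = (ψ v)⁻¹ • ∑ c ∈ tF.attach, φ c.1 v • c.1 := by
    intro v
    simp [hA]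
  have hAest : ∀ v, 0 < ψ v → dist ((A v : E)) v ≤ ε' := by
    intro v hv
    have hsum_attach : ∑ c ∈ tF.attach, φ c.1 v = ψ v := by
      rw [hψ]
      exact Finset.sum_attach tF fun c => φ c v
    have h1 : ∑ c ∈ tF.attach, φ c.1 v • (c.1 - v)
        = (∑ c ∈ tF.attach, φ c.1 v • c.1) - ψ v • v := by
      rw [← hsum_attach, Finset.sum_smul, ← Finset.sum_sub_distrib]
      congr 1
      ext c
      rw [smul_sub]
    have h2 : (A v : E) - v = (ψ v)⁻¹ • ∑ c ∈ tF.attach, φ c.1 v • (c.1 - v) := by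
      rw [hAcoe, h1, smul_sub, inv_smul_smul₀ (ne_of_gt hv)]
    have h3 : ‖∑ c ∈ tF.attach, φ c.1 v • (c.1 - v)‖ ≤ ψ v * ε' := by
      calc ‖∑ c ∈ tF.attach, φ c.1 v • (c.1 - v)‖
          ≤ ∑ c ∈ tF.attach, ‖φ c.1 v • (c.1 - v)‖ := norm_sum_le _ _
        _ ≤ ∑ c ∈ tF.attach, φ c.1 v * ε' := by
            refine Finset.sum_le_sum fun c _ => ?_
            rw [norm_smul, Real.norm_of_nonneg (hφnonneg c.1 v)]
            rcases eq_or_lt_of_le (hφnonneg c.1 v) with h | h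
            · rw [← h, zero_mul, zero_mul]
            · refine mul_le_mul_of_nonneg_left ?_ (le_of_lt h)
              have hd : dist v c.1 < ε' := (hφpos_iff c.1 v).mp h
              rw [← dist_eq_norm, dist_comm]
              exact le_of_lt hd
        _ = ψ v * ε' := by rw [← Finset.sum_mul, hsum_attach]
    rw [dist_eq_norm, h2, norm_smul, Real.norm_of_nonneg (inv_nonneg.mpr (le_of_lt hv))]
    calc (ψ v)⁻¹ * ‖∑ c ∈ tF.attach, φ c.1 v • (c.1 - v)‖
        ≤ (ψ v)⁻¹ * (ψ v * ε') :=
          mul_le_mul_of_nonneg_left h3 (inv_nonneg.mpr (le_of_lt hv))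
      _ = ε' := by field_simp
  -- Tietze extension of the finite-dimensional approximation of μ
  have hψμ : ∀ y : {y : ∀ i, Y i // ∀ i, g i (y (i + 1)) = y i}, 0 < ψ (μ y) :=
    fun y => hψposC (μ y) (Set.mem_range_self y)
  set μ₁ : {y : ∀ i, Y i // ∀ i, g i (y (i + 1)) = y i} → F := fun y => A (μ y) with hμ₁
  have hμ₁cont : Continuous μ₁ := hAcont.comp_continuous hμc fun y => hψμ y
  haveI : TietzeExtension ↥F := TietzeExtension.of_tvs ℝ
  obtain ⟨M, hM⟩ := ContinuousMap.exists_restrict_eq (X := ∀ i, Y i) (s := S) hSclosed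
    (⟨μ₁, hμ₁cont⟩ : C(S, F))
  have hMS : ∀ y : {y : ∀ i, Y i // ∀ i, g i (y (i + 1)) = y i}, M y.1 = μ₁ y := by
    intro y
    have h1 := ContinuousMap.congr_fun hM (⟨y.1, y.2⟩ : S)
    exact h1
  set Me : (∀ i, Y i) → E := fun x => (M x : E) with hMe
  have hMecont : Continuous Me := continuous_subtype_val.comp M.continuous
  have hMeS : ∀ y : {y : ∀ i, Y i // ∀ i, g i (y (i + 1)) = y i},
      dist (Me y.1) (μ y) ≤ ε' := by
    intro y
    have h1 : Me y.1 = ((A (μ y) : F) : E) := by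
      rw [hMe]
      exact congrArg Subtype.val (hMS y)
    rw [h1]
    exact hAest (μ y) (hψμ y)
  set V : Set (∀ i, Y i) := Me ⁻¹' U with hV
  have hVopen : IsOpen V := hU.preimage hMecont
  have hSV : S ⊆ V := by
    intro x hx
    have h1 : dist (Me x) (μ ⟨x, hx⟩) ≤ ε' := hMeS ⟨x, hx⟩
    exact hδ₁U (Me x) (μ ⟨x, hx⟩) (Set.mem_range_self _)
      (lt_of_le_of_lt h1 (by rw [hε'def]; linarith))
  -- the retraction composed with the extension
  set r' : E → E := fun v => if h : v ∈ U then r ⟨v, h⟩ else v with hr'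
  have hr'cont : ContinuousOn r' U := by
    rw [continuousOn_iff_continuous_restrict]
    have h1 : U.domRestrict r' = r := by
      funext u
      show r' (u : E) = r u
      simp only [hr', dif_pos u.2]
    rw [h1]; exact hr
  have hr'P : ∀ v ∈ U, r' v ∈ P := by
    intro v hv
    simp only [hr', dif_pos hv]
    exact hrP _
  set G : (∀ i, Y i) → E := fun x => r' (Me x) with hG
  have hGV : ContinuousOn G V := hr'cont.comp hMecont.continuousOn fun x hx => hx
  have hGP : ∀ x ∈ V, G x ∈ P := fun x hx => hr'P _ hx
  have hGclose : ∀ y : {y : ∀ i, Y i // ∀ i, g i (y (i + 1)) = y i},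
      dist (G y.1) (μ y) < ε / 2 := by
    intro y
    have h1 : dist (Me y.1) (μ y) < δ₁ :=
      lt_of_le_of_lt (hMeS y) (by rw [hε'def]; linarith)
    have hvU : Me y.1 ∈ U := hδ₁U _ _ (Set.mem_range_self y) h1
    have h2 := hδ₁r (Me y.1) (μ y) (Set.mem_range_self y) h1 hvU
    calc dist (G y.1) (μ y) = dist (r ⟨Me y.1, hvU⟩) (μ y) := by
          simp only [hG, hr', dif_pos hvU]
      _ < ε / 2 := h2
  -- some partial-thread set is contained in V
  obtain ⟨i₁, hi₁⟩ : ∃ n, T n ⊆ V := by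
    by_contra hcon
    push_neg at hcon
    have hne' : ∀ n, (T n ∩ Vᶜ).Nonempty := by
      intro n
      obtain ⟨x, hx1, hx2⟩ := Set.not_subset.mp (hcon n)
      exact ⟨x, hx1, hx2⟩
    have hdir' : Directed (· ⊇ ·) (fun n => T n ∩ Vᶜ) := fun a b =>
      ⟨max a b, Set.inter_subset_inter_left _ (hTanti (le_max_left a b)),
        Set.inter_subset_inter_left _ (hTanti (le_max_right a b))⟩
    obtain ⟨x, hx⟩ := IsCompact.nonempty_iInter_of_directed_nonempty_isCompact_isClosed _
      hdir' hne' (fun n => ((hTclosed n).inter hVopen.isClosed_compl).isCompact)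
      (fun n => (hTclosed n).inter hVopen.isClosed_compl)
    have hxS : x ∈ S := by
      intro i
      have h1 := (Set.mem_iInter.mp hx (i + 1)).1
      simp only [hT, Set.mem_iInter] at h1
      exact h1 i (Finset.mem_range.mpr (Nat.lt_succ_self i))
    exact (Set.mem_iInter.mp hx 0).2 (hSV hxS)
  -- uniform continuity of G on the compact set T i₁
  have hGu : UniformContinuousOn G (T i₁) :=
    (hTcpt i₁).uniformContinuousOn_of_continuous (hGV.mono hi₁)
  have hWmem : {q : (∀ i, Y i) × (∀ i, Y i) |
      q ∈ (T i₁) ×ˢ (T i₁) → dist (G q.1) (G q.2) < ε / 2} ∈ 𝓤 (∀ i, Y i) := by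
    have h1 := hGu (Metric.dist_mem_uniformity (half_pos hε))
    exact Filter.mem_inf_principal.mp h1
  rw [Pi.uniformity] at hWmem
  obtain ⟨I, hIfin, Vm, hVmmem, hWeq⟩ := Filter.mem_iInf.mp hWmem
  choose tU htUmem htUsub using fun i : I => Filter.mem_comap.mp (hVmmem i)
  obtain ⟨N, hN⟩ := hIfin.bddAbove
  have hagree : ∀ x x' : ∀ i, Y i, (∀ m ∈ I, x m = x' m) → x ∈ T i₁ → x' ∈ T i₁ →
      dist (G x) (G x') < ε / 2 := by
    intro x x' hxx' hx hx'
    have hmem : (x, x') ∈ {q : (∀ i, Y i) × (∀ i, Y i) |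
        q ∈ (T i₁) ×ˢ (T i₁) → dist (G q.1) (G q.2) < ε / 2} := by
      rw [hWeq]
      refine Set.mem_iInter.mpr fun i => ?_
      apply htUsub i
      simp only [Set.mem_preimage]
      rw [hxx' i.1 i.2]
      exact refl_mem_uniformity (htUmem i)
    exact hmem ⟨hx, hx'⟩
  -- conclusion
  refine ⟨max i₁ (N + 1), fun k => ?_⟩
  set j := max i₁ (N + 1) + k with hj
  have hi₁j : i₁ ≤ j := le_trans (le_max_left _ _) (Nat.le_add_right _ _)
  have hNj : N + 1 ≤ j := le_trans (le_max_right _ _) (Nat.le_add_right _ _)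
  have hTV : ∀ z : Y j, ApproxFactAux.ext g p j z ∈ V := fun z =>
    hi₁ (hTanti hi₁j (hextT j z j le_rfl))
  refine ⟨fun z => G (ApproxFactAux.ext g p j z),
    hGV.comp_continuous (ApproxFactAux.ext_continuous g hg p j) hTV,
    fun z => hGP _ (hTV z), ?_⟩
  intro y
  have hyT : y.1 ∈ T i₁ := hST i₁ y.2
  have hxT : ApproxFactAux.ext g p j (y.1 j) ∈ T i₁ := hTanti hi₁j (hextT j _ j le_rfl)
  have hagr : ∀ m ∈ I, ApproxFactAux.ext g p j (y.1 j) m = y.1 m := by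
    intro m hm
    exact ApproxFactAux.ext_thread g p y.1 y.2 j m
      (le_trans (le_trans (hN hm) (Nat.le_succ N)) hNj)
  have h1 := hagree _ _ hagr hxT hyT
  have h2 := hGclose y
  calc dist (G (ApproxFactAux.ext g p j (y.1 j))) (μ y)
      ≤ dist (G (ApproxFactAux.ext g p j (y.1 j))) (G y.1) + dist (G y.1) (μ y) :=
        dist_triangle _ _ _
    _ < ε / 2 + ε / 2 := add_lt_add h1 h2
    _ = ε := add_halves ε
end

section
/- Let X be a compact metrizable space and let T be a finite geometric simplicial complex in ℝ^n with polyhedron P = |T|. Then the set [X, P] of homotopy classes of continuous maps from X to P is countable. -/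
open Set Metric

/-- Nearest point projection onto a nonempty closed convex set in a real Hilbert space. -/
lemma convex_proj {E : Type*} [NormedAddCommGroup E] [InnerProductSpace ℝ E] [CompleteSpace E]
    {K : Set E} (hKcl : IsClosed K) (hKco : Convex ℝ K) (hne : K.Nonempty) :
    ∃ r : E → E, Continuous r ∧ (∀ x, r x ∈ K) ∧ ∀ x ∈ K, r x = x := by
  haveI := hne.to_subtype
  have hcomp : IsComplete K := hKcl.isComplete
  choose r hrK hr using exists_norm_eq_iInf_of_complete_convex hne hcomp hKco
  have hchar : ∀ u, ∀ w ∈ K, (inner ℝ (u - r u) (w - r u) : ℝ) ≤ 0 := fun u =>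
    (norm_eq_iInf_iff_real_inner_le_zero hKco (hrK u)).1 (hr u)
  have hlip : ∀ x y, ‖r x - r y‖ ≤ ‖x - y‖ := by
    intro x y
    have hA := hchar x (r y) (hrK y)
    have hB := hchar y (r x) (hrK x)
    have expand : (inner ℝ (x - y) (r x - r y) : ℝ) - ‖r x - r y‖ ^ 2 =
        -(inner ℝ (x - r x) (r y - r x) : ℝ) - (inner ℝ (y - r y) (r x - r y) : ℝ) := by
      rw [← real_inner_self_eq_norm_sq]
      simp only [inner_sub_left, inner_sub_right]
      linarith [real_inner_comm x y, real_inner_comm x (r x), real_inner_comm x (r y),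
        real_inner_comm y (r x), real_inner_comm y (r y), real_inner_comm (r x) (r y)]
    have key : ‖r x - r y‖ ^ 2 ≤ (inner ℝ (x - y) (r x - r y) : ℝ) := by linarith
    rcases eq_or_lt_of_le (norm_nonneg (r x - r y)) with h | h
    · rw [← h]; exact norm_nonneg _
    · have := key.trans (real_inner_le_norm (x - y) (r x - r y))
      nlinarith
  refine ⟨r, ?_, hrK, fun x hx => ?_⟩
  · rw [Metric.continuous_iff]
    intro b ε hε
    exact ⟨ε, hε, fun a ha => by
      rw [dist_eq_norm] at *
      exact lt_of_le_of_lt (hlip a b) ha⟩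
  · have h1 : (⨅ w : K, ‖x - ↑w‖) ≤ ‖x - x‖ :=
      ciInf_le (f := fun w : K => ‖x - ↑w‖) ⟨0, forall_mem_range.2 fun _ => norm_nonneg _⟩ ⟨x, hx⟩
    have h2 : (0:ℝ) ≤ ⨅ w : K, ‖x - ↑w‖ := le_ciInf fun _ => norm_nonneg _
    have h0 : ‖x - r x‖ = 0 := by
      rw [hr x]; simp only [sub_self, norm_zero] at h1; linarith
    exact (norm_sub_eq_zero_iff.mp h0).symm

def IsNR {α : Type*} [TopologicalSpace α] (M : Set α) : Prop :=
  ∃ (U : Set α) (r : α → α), IsOpen U ∧ M ⊆ U ∧ ContinuousOn r U ∧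
    Set.MapsTo r U M ∧ Set.EqOn r id M

lemma continuousOn_union_closed {α β : Type*} [TopologicalSpace α] [TopologicalSpace β]
    {f : α → β} {s t : Set α} (hs : IsClosed s) (ht : IsClosed t)
    (hfs : ContinuousOn f s) (hft : ContinuousOn f t) : ContinuousOn f (s ∪ t) := by
  intro x hx
  have h1 : ContinuousWithinAt f s x := by
    by_cases h : x ∈ s
    · exact hfs x h
    · exact continuousWithinAt_of_notMem_closure (by rwa [hs.closure_eq])
  have h2 : ContinuousWithinAt f t x := by
    by_cases h : x ∈ t
    · exact hft x h
    · exact continuousWithinAt_of_notMem_closure (by rwa [ht.closure_eq])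
  exact h1.union h2

lemma exists_continuous_extension {α : Type} [MetricSpace α] [TietzeExtension.{0,0} α]
    {S : Set α} (hS : IsClosed S) {f : α → α} (hf : ContinuousOn f S) :
    ∃ F : α → α, Continuous F ∧ Set.EqOn F f S := by
  obtain ⟨g, hg⟩ := ContinuousMap.exists_restrict_eq hS (⟨S.restrict f, hf.restrict⟩ : C(S, α))
  exact ⟨g, g.continuous, fun x hx => DFunLike.congr_fun hg ⟨x, hx⟩⟩

lemma isNR_union {α : Type} [MetricSpace α] [TietzeExtension.{0,0} α]
    {A B : Set α} (hAc : IsCompact A) (hBc : IsCompact B)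
    (nA : IsNR A) (nB : IsNR B) (nC : IsNR (A ∩ B)) : IsNR (A ∪ B) := by
  classical
  rcases A.eq_empty_or_nonempty with rfl | hAne
  · simpa using nB
  rcases B.eq_empty_or_nonempty with rfl | hBne
  · simpa using nA
  have hAcl := hAc.isClosed
  have hBcl := hBc.isClosed
  obtain ⟨UA, rA, oUA, hAU, cA, mA, eA⟩ := nA
  obtain ⟨UB, rB, oUB, hBU, cB, mB, eB⟩ := nB
  obtain ⟨UC, rC, oUC, hCU, cC, mC, eC⟩ := nC
  obtain ⟨δ, δpos, hδ⟩ :=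
    (hAc.inter_right hBcl).exists_thickening_subset_open oUC hCU
  set C : Set α := A ∩ B with hC
  set O₁ : Set α := thickening (δ/2) C with hO₁
  set O₂ : Set α := cthickening (δ/2) C with hO₂
  have hO₂UC : O₂ ⊆ UC := (cthickening_subset_thickening' δpos (by linarith) C).trans hδ
  have oO₁ : IsOpen O₁ := isOpen_thickening
  have clO₂ : IsClosed O₂ := isClosed_cthickening
  have hO₁O₂ : O₁ ⊆ O₂ := thickening_subset_cthickening _ _
  have hCO₁ : C ⊆ O₁ := self_subset_thickening (by positivity) C
  set dA : α → ℝ := fun x => infDist x A with hdA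
  set dB : α → ℝ := fun x => infDist x B with hdB
  have cdA : Continuous dA := continuous_infDist_pt A
  have cdB : Continuous dB := continuous_infDist_pt B
  set X₀ : Set α := {x | dA x = dB x} with hX₀
  have clX₀ : IsClosed X₀ := isClosed_eq cdA cdB
  have hAX₀ : ∀ x ∈ A, x ∈ X₀ → x ∈ C := by
    intro x hxA hx0
    have h1 : dA x = 0 := infDist_zero_of_mem hxA
    have h2 : dB x = 0 := by rw [← (show dA x = dB x from hx0), h1]
    exact ⟨hxA, (hBcl.mem_iff_infDist_zero hBne).2 h2⟩
  have hBX₀ : ∀ x ∈ B, x ∈ X₀ → x ∈ C := by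
    intro x hxB hx0
    have h1 : dB x = 0 := infDist_zero_of_mem hxB
    have h2 : dA x = 0 := by rw [(show dA x = dB x from hx0), h1]
    exact ⟨(hAcl.mem_iff_infDist_zero hAne).2 h2, hxB⟩
  -- the two partial maps and their extensions
  set S₁ : Set α := A ∪ (X₀ ∩ O₂) with hS₁
  have clS₁ : IsClosed S₁ := hAcl.union (clX₀.inter clO₂)
  set f₁ : α → α := fun x => if x ∈ A then x else rC x with hf₁
  have hf₁A : Set.EqOn f₁ id A := fun x hx => by simp [hf₁, hx]
  have hf₁X : Set.EqOn f₁ rC (X₀ ∩ O₂) := by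
    intro x hx
    by_cases hxA : x ∈ A
    · have hxC : x ∈ C := hAX₀ x hxA hx.1
      have : rC x = x := eC hxC
      simp [hf₁, hxA, this]
    · simp [hf₁, hxA]
  have cf₁ : ContinuousOn f₁ S₁ :=
    continuousOn_union_closed hAcl (clX₀.inter clO₂)
      (continuousOn_id.congr hf₁A)
      ((cC.mono (fun x hx => hO₂UC hx.2)).congr hf₁X)
  have hf₁S : ∀ x ∈ S₁, f₁ x ∈ A := by
    rintro x (hx | hx)
    · rw [hf₁A hx]; exact hx
    · rw [hf₁X hx]; exact (mC (hO₂UC hx.2)).1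
  obtain ⟨F₁, cF₁, eF₁⟩ := exists_continuous_extension clS₁ cf₁
  set V₁ : Set α := F₁ ⁻¹' UA with hV₁
  have oV₁ : IsOpen V₁ := oUA.preimage cF₁
  have hS₁V₁ : S₁ ⊆ V₁ := fun x hx => by
    rw [hV₁, mem_preimage, eF₁ hx]; exact hAU (hf₁S x hx)
  set G₁ : α → α := fun x => rA (F₁ x) with hG₁
  have cG₁ : ContinuousOn G₁ V₁ := cA.comp cF₁.continuousOn (fun x hx => hx)
  have mG₁ : ∀ x ∈ V₁, G₁ x ∈ A := fun x hx => mA hx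
  have eG₁ : ∀ x ∈ S₁, G₁ x = f₁ x := fun x hx => by
    rw [hG₁]; simp only; rw [eF₁ hx]; exact eA (hf₁S x hx)
  -- symmetric side
  set S₂ : Set α := B ∪ (X₀ ∩ O₂) with hS₂
  have clS₂ : IsClosed S₂ := hBcl.union (clX₀.inter clO₂)
  set f₂ : α → α := fun x => if x ∈ B then x else rC x with hf₂
  have hf₂B : Set.EqOn f₂ id B := fun x hx => by simp [hf₂, hx]
  have hf₂X : Set.EqOn f₂ rC (X₀ ∩ O₂) := by
    intro x hx
    by_cases hxB : x ∈ B
    · have hxC : x ∈ C := hBX₀ x hxB hx.1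
      have : rC x = x := eC hxC
      simp [hf₂, hxB, this]
    · simp [hf₂, hxB]
  have cf₂ : ContinuousOn f₂ S₂ :=
    continuousOn_union_closed hBcl (clX₀.inter clO₂)
      (continuousOn_id.congr hf₂B)
      ((cC.mono (fun x hx => hO₂UC hx.2)).congr hf₂X)
  have hf₂S : ∀ x ∈ S₂, f₂ x ∈ B := by
    rintro x (hx | hx)
    · rw [hf₂B hx]; exact hx
    · rw [hf₂X hx]; exact (mC (hO₂UC hx.2)).2
  obtain ⟨F₂, cF₂, eF₂⟩ := exists_continuous_extension clS₂ cf₂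
  set V₂ : Set α := F₂ ⁻¹' UB with hV₂
  have oV₂ : IsOpen V₂ := oUB.preimage cF₂
  have hS₂V₂ : S₂ ⊆ V₂ := fun x hx => by
    rw [hV₂, mem_preimage, eF₂ hx]; exact hBU (hf₂S x hx)
  set G₂ : α → α := fun x => rB (F₂ x) with hG₂
  have cG₂ : ContinuousOn G₂ V₂ := cB.comp cF₂.continuousOn (fun x hx => hx)
  have mG₂ : ∀ x ∈ V₂, G₂ x ∈ B := fun x hx => mB hx
  have eG₂ : ∀ x ∈ S₂, G₂ x = f₂ x := fun x hx => by
    rw [hG₂]; simp only; rw [eF₂ hx]; exact eB (hf₂S x hx)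
  -- the neighborhood and the retraction
  set W₁ : Set α := {x | dA x < dB x} with hW₁
  set W₂ : Set α := {x | dB x < dA x} with hW₂
  have oW₁ : IsOpen W₁ := isOpen_lt cdA cdB
  have oW₂ : IsOpen W₂ := isOpen_lt cdB cdA
  set U : Set α := (V₁ ∩ W₁) ∪ (V₂ ∩ W₂) ∪ (V₁ ∩ V₂ ∩ O₁) with hU
  have oU : IsOpen U := (((oV₁.inter oW₁).union (oV₂.inter oW₂)).union ((oV₁.inter oV₂).inter oO₁))
  have hMU : A ∪ B ⊆ U := by
    rintro x (hxA | hxB)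
    · by_cases hxB : x ∈ B
      · exact Or.inr ⟨⟨hS₁V₁ (Or.inl hxA), hS₂V₂ (Or.inl hxB)⟩, hCO₁ ⟨hxA, hxB⟩⟩
      · refine Or.inl (Or.inl ⟨hS₁V₁ (Or.inl hxA), ?_⟩)
        have h1 : dA x = 0 := infDist_zero_of_mem hxA
        have h2 : dB x ≠ 0 := fun h => hxB ((hBcl.mem_iff_infDist_zero hBne).2 h)
        have h3 : 0 ≤ dB x := infDist_nonneg
        show dA x < dB x
        rw [h1]; exact lt_of_le_of_ne h3 (Ne.symm h2)
    · by_cases hxA : x ∈ A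
      · exact Or.inr ⟨⟨hS₁V₁ (Or.inl hxA), hS₂V₂ (Or.inl hxB)⟩, hCO₁ ⟨hxA, hxB⟩⟩
      · refine Or.inl (Or.inr ⟨hS₂V₂ (Or.inl hxB), ?_⟩)
        have h1 : dB x = 0 := infDist_zero_of_mem hxB
        have h2 : dA x ≠ 0 := fun h => hxA ((hAcl.mem_iff_infDist_zero hAne).2 h)
        have h3 : 0 ≤ dA x := infDist_nonneg
        show dB x < dA x
        rw [h1]; exact lt_of_le_of_ne h3 (Ne.symm h2)
  set r : α → α := fun x => if dA x ≤ dB x then G₁ x else G₂ x with hr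
  -- at tie points of U both branches agree
  have tie : ∀ x ∈ U, dA x = dB x →
      x ∈ V₁ ∧ x ∈ V₂ ∧ x ∈ O₁ ∧ G₁ x = rC x ∧ G₂ x = rC x := by
    intro x hxU heq
    have hx3 : x ∈ V₁ ∩ V₂ ∩ O₁ := by
      rcases hxU with (⟨_, h⟩ | ⟨_, h⟩) | h3
      · exact absurd heq (ne_of_lt h)
      · exact absurd heq.symm (ne_of_lt h)
      · exact h3
    have hxX₀ : x ∈ X₀ := heq
    have hxS : x ∈ X₀ ∩ O₂ := ⟨hxX₀, hO₁O₂ hx3.2⟩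
    refine ⟨hx3.1.1, hx3.1.2, hx3.2, ?_, ?_⟩
    · rw [eG₁ x (Or.inr hxS)]; exact hf₁X hxS
    · rw [eG₂ x (Or.inr hxS)]; exact hf₂X hxS
  have hUV₁ : ∀ x ∈ U, dA x ≤ dB x → x ∈ V₁ := by
    intro x hxU hle
    rcases hxU with (⟨h, _⟩ | ⟨_, h⟩) | h3
    · exact h
    · exact absurd (lt_of_lt_of_le h hle) (lt_irrefl _)
    · exact h3.1.1
  have hUV₂ : ∀ x ∈ U, dB x ≤ dA x → x ∈ V₂ := by
    intro x hxU hle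
    rcases hxU with (⟨_, h⟩ | ⟨h, _⟩) | h3
    · exact absurd hle (not_le.2 h)
    · exact h
    · exact h3.1.2
  have mrU : Set.MapsTo r U (A ∪ B) := by
    intro x hxU
    by_cases h : dA x ≤ dB x
    · have : r x = G₁ x := if_pos h
      rw [this]; exact Or.inl (mG₁ x (hUV₁ x hxU h))
    · have : r x = G₂ x := if_neg h
      rw [this]; exact Or.inr (mG₂ x (hUV₂ x hxU (le_of_lt (not_le.1 h))))
  have erU : Set.EqOn r id (A ∪ B) := by
    rintro x (hxA | hxB)
    · have h1 : dA x = 0 := infDist_zero_of_mem hxA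
      have hle : dA x ≤ dB x := by rw [h1]; exact infDist_nonneg
      have : r x = G₁ x := if_pos hle
      rw [this, eG₁ x (Or.inl hxA), hf₁A hxA]
    · by_cases hxA : x ∈ A
      · have h1 : dA x = 0 := infDist_zero_of_mem hxA
        have hle : dA x ≤ dB x := by rw [h1]; exact infDist_nonneg
        have : r x = G₁ x := if_pos hle
        rw [this, eG₁ x (Or.inl hxA), hf₁A hxA]
      · have h1 : dB x = 0 := infDist_zero_of_mem hxB
        have h2 : 0 < dA x := by
          rcases lt_or_eq_of_le (infDist_nonneg : 0 ≤ dA x) with h | h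
          · exact h
          · exact absurd ((hAcl.mem_iff_infDist_zero hAne).2 h.symm) hxA
        have hlt : ¬ (dA x ≤ dB x) := by rw [h1]; exact not_le.2 h2
        have : r x = G₂ x := if_neg hlt
        rw [this, eG₂ x (Or.inl hxB), hf₂B hxB]
  have crU : ContinuousOn r U := by
    intro x hxU
    rcases lt_trichotomy (dA x) (dB x) with hlt | heq | hgt
    · have hxV₁ : x ∈ V₁ := hUV₁ x hxU (le_of_lt hlt)
      have hc : ContinuousAt G₁ x := cG₁.continuousAt (oV₁.mem_nhds hxV₁)
      have hev : r =ᶠ[nhds x] G₁ := by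
        filter_upwards [oW₁.mem_nhds hlt] with y hy
        exact if_pos (le_of_lt hy)
      exact ((continuousAt_congr hev).2 hc).continuousWithinAt
    · obtain ⟨hxV₁, hxV₂, hxO₁, hG1, hG2⟩ := tie x hxU heq
      have hc₁ : ContinuousAt G₁ x := cG₁.continuousAt (oV₁.mem_nhds hxV₁)
      have hc₂ : ContinuousAt G₂ x := cG₂.continuousAt (oV₂.mem_nhds hxV₂)
      have hrx : r x = G₁ x := if_pos (le_of_eq heq)
      have hT : Filter.Tendsto r (nhds x) (nhds (G₁ x)) := by
        rw [Filter.tendsto_def]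
        intro s hs
        have h1 : ∀ᶠ y in nhds x, G₁ y ∈ s := hc₁ hs
        have h2 : ∀ᶠ y in nhds x, G₂ y ∈ s := by
          have hGG : G₂ x = G₁ x := by rw [hG1, hG2]
          exact hc₂ (by rwa [hGG])
        filter_upwards [h1, h2] with y hy1 hy2
        by_cases h : dA y ≤ dB y
        · simpa [hr, Set.mem_preimage, if_pos h] using hy1
        · simpa [hr, Set.mem_preimage, if_neg h] using hy2
      have : ContinuousAt r x := by rw [ContinuousAt, hrx]; exact hT
      exact this.continuousWithinAt
    · have hxV₂ : x ∈ V₂ := hUV₂ x hxU (le_of_lt hgt)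
      have hc : ContinuousAt G₂ x := cG₂.continuousAt (oV₂.mem_nhds hxV₂)
      have hev : r =ᶠ[nhds x] G₂ := by
        filter_upwards [oW₂.mem_nhds hgt] with y hy
        exact if_neg (not_le.2 hy)
      exact ((continuousAt_congr hev).2 hc).continuousWithinAt
  exact ⟨U, r, oU, hMU, crU, mrU, erU⟩

lemma isNR_convex {n : ℕ} {K : Set (Fin n → ℝ)} (hKcl : IsClosed K) (hKco : Convex ℝ K)
    (hne : K.Nonempty) : IsNR K := by
  let e : EuclideanSpace ℝ (Fin n) ≃L[ℝ] (Fin n → ℝ) :=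
    (EuclideanSpace.equiv (Fin n) ℝ : EuclideanSpace ℝ (Fin n) ≃L[ℝ] (Fin n → ℝ))
  set K' : Set (EuclideanSpace ℝ (Fin n)) := e ⁻¹' K with hK'
  have hcl : IsClosed K' := hKcl.preimage e.continuous
  have hco : Convex ℝ K' := hKco.linear_preimage (e : EuclideanSpace ℝ (Fin n) →ₗ[ℝ] (Fin n → ℝ))
  have hne' : K'.Nonempty := ⟨e.symm hne.choose, by simp [hK', hne.choose_spec]⟩
  obtain ⟨r', hc, hm, hid⟩ := convex_proj hcl hco hne'
  refine ⟨Set.univ, fun x => e (r' (e.symm x)), isOpen_univ, Set.subset_univ _, ?_, ?_, ?_⟩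
  · exact ((e.continuous.comp hc).comp e.symm.continuous).continuousOn
  · intro x _
    have := hm (e.symm x)
    simpa [hK'] using this
  · intro x hx
    have hxK' : e.symm x ∈ K' := by simp [hK', hx]
    show e (r' (e.symm x)) = x
    rw [hid _ hxK']
    simp

lemma isNR_empty {α : Type*} [TopologicalSpace α] : IsNR (∅ : Set α) :=
  ⟨∅, id, isOpen_empty, le_rfl, continuousOn_id, fun _ hx => hx.elim, fun _ _ => rfl⟩

/-- Union of a list of sets. -/
def UL {α : Type*} (l : List (Set α)) : Set α := l.foldr (· ∪ ·) ∅

@[simp] lemma UL_nil {α : Type*} : UL ([] : List (Set α)) = ∅ := rfl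

@[simp] lemma UL_cons {α : Type*} (a : Set α) (l : List (Set α)) : UL (a :: l) = a ∪ UL l := rfl

lemma UL_compact {α : Type*} [TopologicalSpace α] :
    ∀ (l : List (Set α)), (∀ K ∈ l, IsCompact K) → IsCompact (UL l) := by
  intro l
  induction l with
  | nil => intro _; exact isCompact_empty
  | cons K tl ih =>
      intro h
      exact (h K List.mem_cons_self).union (ih fun L hL => h L (List.mem_cons_of_mem _ hL))

lemma UL_inter {α : Type*} (K : Set α) :
    ∀ (l : List (Set α)), K ∩ UL l = UL (l.map (fun L => K ∩ L)) := by
  intro l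
  induction l with
  | nil => simp [UL]
  | cons L tl ih =>
      show K ∩ (L ∪ UL tl) = (K ∩ L) ∪ UL (tl.map _)
      rw [Set.inter_union_distrib_left, ih]

lemma isNR_UL {n : ℕ} :
    ∀ (m : ℕ) (l : List (Set (Fin n → ℝ))), l.length ≤ m →
      (∀ K ∈ l, IsCompact K ∧ Convex ℝ K) → IsNR (UL l) := by
  intro m
  induction m with
  | zero =>
      intro l hl _
      have : l = [] := List.length_eq_zero_iff.1 (Nat.le_zero.1 hl)
      subst this
      exact isNR_empty
  | succ m ih =>
      intro l hl h
      cases l with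
      | nil => exact isNR_empty
      | cons K tl =>
          have hK := h K List.mem_cons_self
          have htl : ∀ L ∈ tl, IsCompact L ∧ Convex ℝ L :=
            fun L hL => h L (List.mem_cons_of_mem _ hL)
          have hKc := hK.1
          have hBc : IsCompact (UL tl) := UL_compact tl fun L hL => (htl L hL).1
          have hlen : tl.length ≤ m := Nat.succ_le_succ_iff.1 hl
          have nA : IsNR K := by
            rcases K.eq_empty_or_nonempty with rfl | hne
            · exact isNR_empty
            · exact isNR_convex hKc.isClosed hK.2 hne
          have nB : IsNR (UL tl) := ih tl hlen htl
          have nC : IsNR (K ∩ UL tl) := by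
            rw [UL_inter]
            refine ih _ (by simpa using hlen) ?_
            intro L' hL'
            obtain ⟨L, hL, rfl⟩ := List.mem_map.1 hL'
            exact ⟨hKc.inter_right (htl L hL).1.isClosed, hK.2.inter (htl L hL).2⟩
          exact isNR_union hKc hBc nA nB nC

lemma isNR_space {n : ℕ} (T : Geometry.SimplicialComplex ℝ (Fin n → ℝ))
    (hT : T.faces.Finite) : IsNR T.space := by
  classical
  set l : List (Set (Fin n → ℝ)) :=
    hT.toFinset.toList.map (fun s : Finset (Fin n → ℝ) => convexHull ℝ (s : Set (Fin n → ℝ))) with hlist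
  have hUL : ∀ (L : List (Finset (Fin n → ℝ))),
      UL (L.map (fun s : Finset (Fin n → ℝ) => convexHull ℝ (s : Set (Fin n → ℝ)))) =
        ⋃ s ∈ L, convexHull ℝ (↑s : Set (Fin n → ℝ)) := by
    intro L
    induction L with
    | nil => simp [UL]
    | cons s tlL ih =>
        rw [List.map_cons, UL_cons, ih]
        simp
  have hspace : T.space = UL l := by
    rw [hlist, hUL]
    ext x
    simp only [Geometry.SimplicialComplex.mem_space_iff, Set.mem_iUnion]
    constructor
    · rintro ⟨s, hs, hx⟩
      exact ⟨s, ⟨by simp [hT.mem_toFinset, hs], hx⟩⟩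
    · rintro ⟨s, hs, hx⟩
      exact ⟨s, by simpa [hT.mem_toFinset] using hs, hx⟩
  rw [hspace]
  refine isNR_UL l.length l le_rfl ?_
  intro K hK
  rw [hlist] at hK
  obtain ⟨s, hsl, hfs⟩ := List.mem_map.1 hK
  subst hfs
  exact ⟨s.finite_toSet.isCompact_convexHull ℝ, convex_convexHull ℝ _⟩

/-- For a compact metrizable space `X` and a finite geometric simplicial
complex `T` in `ℝⁿ` with polyhedron `P = |T|`, the set `[X, P]` of homotopy classes of
continuous maps `X → P` is countable. -/
theorem countable_homotopy_classes_of_maps_to_polyhedron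
    (X : Type*) [TopologicalSpace X] [CompactSpace X] [TopologicalSpace.MetrizableSpace X]
    {n : ℕ} (T : Geometry.SimplicialComplex ℝ (Fin n → ℝ)) (hT : T.faces.Finite) :
    Countable (Quot (ContinuousMap.Homotopic (X := X) (Y := T.space))) := by
  letI : MetricSpace X := TopologicalSpace.metrizableSpaceMetric X
  obtain ⟨U, r, oU, hPU, crU, mrU, erU⟩ := isNR_space T hT
  have hPc : IsCompact T.space := by
    have : T.space = ⋃ s ∈ hT.toFinset, convexHull ℝ (↑s : Set (Fin n → ℝ)) := by
      ext x
      simp [Geometry.SimplicialComplex.mem_space_iff, hT.mem_toFinset]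
    rw [this]
    exact hT.toFinset.isCompact_biUnion fun s _ => s.finite_toSet.isCompact_convexHull ℝ
  obtain ⟨δ, δpos, hδ⟩ := hPc.exists_thickening_subset_open oU hPU
  -- two maps at distance < δ are homotopic
  have key : ∀ f g : C(X, ↥T.space), dist f g < δ → f.Homotopic g := by
    intro f g hfg
    have hpt : ∀ x, dist ((f x : Fin n → ℝ)) ((g x : Fin n → ℝ)) < δ := fun x => by
      rw [← Subtype.dist_eq]
      exact lt_of_le_of_lt (ContinuousMap.dist_apply_le_dist x) hfg
    set line : ↥unitInterval × X → (Fin n → ℝ) :=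
      fun p => (1 - (p.1 : ℝ)) • ((f p.2 : Fin n → ℝ)) + (p.1 : ℝ) • ((g p.2 : Fin n → ℝ))
      with hlineDef
    have hline_cont : Continuous line := by
      apply Continuous.add
      · exact (continuous_const.sub (continuous_subtype_val.comp continuous_fst)).smul
          (continuous_subtype_val.comp (f.continuous.comp continuous_snd))
      · exact (continuous_subtype_val.comp continuous_fst).smul
          (continuous_subtype_val.comp (g.continuous.comp continuous_snd))
    have hmemU : ∀ p, line p ∈ U := by
      rintro ⟨t, x⟩
      have hd : dist (line (t, x)) ((f x : Fin n → ℝ)) ≤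
          dist ((f x : Fin n → ℝ)) ((g x : Fin n → ℝ)) := by
        rw [dist_eq_norm, dist_eq_norm]
        have : line (t, x) - (f x : Fin n → ℝ) =
            (t : ℝ) • (((g x : Fin n → ℝ)) - ((f x : Fin n → ℝ))) := by
          rw [hlineDef]
          simp only
          rw [smul_sub, sub_smul, one_smul]
          abel
        rw [this, norm_smul]
        have h01 : 0 ≤ (t : ℝ) ∧ (t : ℝ) ≤ 1 := ⟨t.2.1, t.2.2⟩
        calc ‖(t : ℝ)‖ * ‖(g x : Fin n → ℝ) - (f x : Fin n → ℝ)‖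
            ≤ 1 * ‖(g x : Fin n → ℝ) - (f x : Fin n → ℝ)‖ := by
              apply mul_le_mul_of_nonneg_right _ (norm_nonneg _)
              rw [Real.norm_eq_abs, abs_of_nonneg h01.1]
              exact h01.2
          _ = ‖(f x : Fin n → ℝ) - (g x : Fin n → ℝ)‖ := by rw [one_mul, norm_sub_rev]
      have : line (t, x) ∈ thickening δ T.space := by
        rw [mem_thickening_iff]
        exact ⟨(f x : Fin n → ℝ), (f x).2, lt_of_le_of_lt (by simpa [dist_eq_norm] using hd)
          (by simpa [dist_eq_norm] using hpt x)⟩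
      exact hδ this
    have hline_ends0 : ∀ x : X, line (0, x) = (f x : Fin n → ℝ) := by
      intro x; rw [hlineDef]; simp
    have hline_ends1 : ∀ x : X, line (1, x) = (g x : Fin n → ℝ) := by
      intro x; rw [hlineDef]; simp
    refine ⟨{ toFun := fun p => ⟨r (line p), mrU (hmemU p)⟩,
              continuous_toFun := ?_, map_zero_left := ?_, map_one_left := ?_ }⟩
    · exact (crU.comp_continuous hline_cont hmemU).subtype_mk _
    · intro x
      apply Subtype.ext
      show r (line (0, x)) = (f x : Fin n → ℝ)
      rw [hline_ends0 x]
      exact erU (f x).2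
    · intro x
      apply Subtype.ext
      show r (line (1, x)) = (g x : Fin n → ℝ)
      rw [hline_ends1 x]
      exact erU (g x).2
  -- separability and conclusion
  obtain ⟨D, hDc, hDd⟩ := TopologicalSpace.exists_countable_dense (C(X, ↥T.space))
  haveI := hDc.to_subtype
  have hsurj : Function.Surjective
      (fun d : D => Quot.mk (ContinuousMap.Homotopic (X := X) (Y := T.space)) (d : C(X, ↥T.space))) := by
    intro q
    obtain ⟨f, hf⟩ := Quot.exists_rep q
    obtain ⟨g, hgD, hgb⟩ := hDd.exists_mem_open isOpen_ball ⟨f, mem_ball_self δpos⟩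
    exact ⟨⟨g, hgD⟩, by rw [← hf]; exact Quot.sound (key g f (mem_ball.1 hgb))⟩
  exact hsurj.countable
end

section
/- Let X ⊆ I^∞ be compact and nonempty. Then there exist a strictly increasing sequence (n_j) in ℕ with n_1 = 1 and a sequence (P_j) of compact polyhedra (each P_j the polyhedron of a finite geometric simplicial complex in ℝ^{n_j}) with P_j ⊆ I^{n_j}, such that: (1) for all j ∈ ℕ, X ⊆ int_{I^∞}(P_j × I^∞_{n_j}) and P_j × I^∞_{n_j} ⊆ N(X, 2/j); and (2) for all j ≥ 2, p_{n_{j-1}}^{n_j}(P_j) ⊆ int_{I^{n_{j-1}}}(P_{j-1}). -/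
open Set Filter Topology

noncomputable section

/-- The Hilbert cube `I^∞ = ∏_{i ≥ 1} [0,1]`; the index `i : ℕ` represents coordinate `i + 1`. -/
abbrev Iinf : Type := ℕ → unitInterval

/-- The metric `ρ(x, y) = Σ_{i=1}^∞ |x_i − y_i| / 2^i` on the Hilbert cube (whose topology is
the product topology carried by `Iinf`). -/
def rho (x y : Iinf) : ℝ := ∑' i : ℕ, |((x i : ℝ)) - (y i : ℝ)| / 2 ^ (i + 1)

/-- `I^k`, identified with the subset `I^k × {0}` of `I^∞` (all coordinates beyond `k` zero). -/
def cubeFin (k : ℕ) : Set Iinf := {x | ∀ i, k ≤ i → x i = 0}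

/-- `p_{k,∞} : I^∞ → I^k`, projection to the first `k` coordinates.  For `j ≤ k` it also
serves as `p_j^k : I^k → I^j`. -/
def proj (k : ℕ) (x : Iinf) : Iinf := fun i => if i < k then x i else 0

/-- `P × I^∞_k = {x ∈ I^∞ : p_{k,∞}(x) ∈ P}`, for `P ⊆ I^k`. -/
def cyl (k : ℕ) (P : Set Iinf) : Set Iinf := {x | proj k x ∈ P}

/-- `N(A, ε)`, the open `ε`-neighborhood of `A` in `(I^∞, ρ)`. -/
def nbhd (A : Set Iinf) (ε : ℝ) : Set Iinf := {x | ∃ a ∈ A, rho x a < ε}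

/-- The interior of `P` relative to the subspace `I^m ⊆ I^∞`. -/
def relInterior (m : ℕ) (P : Set Iinf) : Set Iinf :=
  {x ∈ cubeFin m | ∃ U : Set Iinf, IsOpen U ∧ x ∈ U ∧ U ∩ cubeFin m ⊆ P}

namespace KuhnCore

open Finset Pointwise

variable {k : ℕ}

/-- A "good face": a nonempty finite chain of integer vectors of pairwise ℓ∞-distance ≤ 1. -/
def IsGoodFace (F : Finset (Fin k → ℝ)) : Prop :=
  F.Nonempty ∧ (∀ v ∈ F, ∀ i, ∃ z : ℤ, v i = z) ∧
    (∀ u ∈ F, ∀ v ∈ F, u ≤ v ∨ v ≤ u) ∧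
    (∀ u ∈ F, ∀ v ∈ F, ∀ i, |u i - v i| ≤ 1)

lemma IsGoodFace.subset {F G : Finset (Fin k → ℝ)} (hF : IsGoodFace F) (hGF : G ⊆ F)
    (hG : G.Nonempty) : IsGoodFace G :=
  ⟨hG, fun v hv => hF.2.1 v (hGF hv), fun u hu v hv => hF.2.2.1 u (hGF hu) v (hGF hv),
    fun u hu v hv => hF.2.2.2 u (hGF hu) v (hGF hv)⟩

lemma exists_bot {F : Finset (Fin k → ℝ)} (hF : IsGoodFace F) :
    ∃ b ∈ F, ∀ v ∈ F, b ≤ v := by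
  obtain ⟨b, hb, hmin⟩ := F.exists_minimal hF.1
  refine ⟨b, hb, fun v hv => ?_⟩
  rcases hF.2.2.1 b hb v hv with h | h
  · exact h
  · rcases eq_or_ne v b with rfl | hne
    · exact le_rfl
    · exact absurd (le_antisymm h (hmin hv h)) hne

lemma two_val {F : Finset (Fin k → ℝ)} (hF : IsGoodFace F) {b : Fin k → ℝ} (hb : b ∈ F)
    (hbot : ∀ v ∈ F, b ≤ v) {v : Fin k → ℝ} (hv : v ∈ F) (i : Fin k) :
    v i = b i ∨ v i = b i + 1 := by
  obtain ⟨zv, hzv⟩ := hF.2.1 v hv i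
  obtain ⟨zb, hzb⟩ := hF.2.1 b hb i
  have h1 : b i ≤ v i := hbot v hv i
  have h2 : |v i - b i| ≤ 1 := hF.2.2.2 v hv b hb i
  rw [hzv, hzb] at h1 h2 ⊢
  rw [abs_le] at h2
  have hle : zb ≤ zv := by exact_mod_cast h1
  have hle2 : (zv : ℝ) ≤ zb + 1 := by linarith [h2.2]
  have hle2' : zv ≤ zb + 1 := by exact_mod_cast hle2
  rcases eq_or_lt_of_le hle with h | h
  · left; rw [h]
  · right
    have : zv = zb + 1 := by omega
    rw [this]; push_cast; ring

/-- The threshold vertex of `x` at level `c`. -/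
def thr (x : Fin k → ℝ) (c : ℝ) : Fin k → ℝ :=
  fun i => (⌊x i⌋ : ℝ) + if c ≤ x i - ⌊x i⌋ then 1 else 0

/-- The canonical threshold levels of `x`. -/
def thrC (x : Fin k → ℝ) : Set ℝ := insert 1 {c | 0 < c ∧ ∃ i, x i - ⌊x i⌋ = c}

/-- The canonical face of `x`. -/
def thrSet (x : Fin k → ℝ) : Set (Fin k → ℝ) := thr x '' thrC x

/-- Key uniqueness: a good face carrying a strictly positive convex combination representing `x`
is equal (as a set) to the canonical face of `x`. -/
lemma coe_eq_thrSet {F : Finset (Fin k → ℝ)} (hF : IsGoodFace F) {w : (Fin k → ℝ) → ℝ}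
    (hw0 : ∀ v ∈ F, 0 < w v) (hw1 : ∑ v ∈ F, w v = 1) :
    (↑F : Set (Fin k → ℝ)) = thrSet (∑ v ∈ F, w v • v) := by
  classical
  set x : Fin k → ℝ := ∑ v ∈ F, w v • v with hxdef
  obtain ⟨b, hb, hbot⟩ := exists_bot hF
  set μ : Fin k → ℝ := fun i => ∑ v ∈ F.filter (fun v => v i = b i + 1), w v with hμdef
  set T : (Fin k → ℝ) → ℝ := fun v => ∑ u ∈ F.filter (fun u => v ≤ u), w u with hTdef
  -- step 1 : x i = b i + μ i
  have hx : ∀ i, x i = b i + μ i := by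
    intro i
    have hsum : x i = ∑ v ∈ F, w v * v i := by
      rw [hxdef, Finset.sum_apply]
      simp [Pi.smul_apply, smul_eq_mul]
    have hterm : ∀ v ∈ F, w v * v i
        = w v * b i + (if v i = b i + 1 then w v else 0) := by
      intro v hv
      rcases two_val hF hb hbot hv i with h | h
      · rw [h, if_neg (by intro hc; nlinarith [hc])]
        ring
      · rw [h, if_pos rfl]
        ring
    rw [hsum, Finset.sum_congr rfl hterm, Finset.sum_add_distrib, ← Finset.sum_mul, hw1,
      one_mul, ← Finset.sum_filter]
  -- step 2 : 0 ≤ μ i < 1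
  have hμ0 : ∀ i, 0 ≤ μ i := fun i =>
    Finset.sum_nonneg fun v hv => (hw0 v (Finset.mem_filter.1 hv).1).le
  have hμ1 : ∀ i, μ i < 1 := by
    intro i
    have hsub : F.filter (fun v => v i = b i + 1) ⊆ F.erase b := by
      intro v hv
      rw [Finset.mem_filter] at hv
      refine Finset.mem_erase.2 ⟨?_, hv.1⟩
      intro h
      rw [h] at hv
      nlinarith [hv.2]
    have h1 : μ i ≤ ∑ v ∈ F.erase b, w v :=
      Finset.sum_le_sum_of_subset_of_nonneg hsub
        (fun v hv _ => (hw0 v (Finset.mem_of_mem_erase hv)).le)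
    have h2 : w b + ∑ v ∈ F.erase b, w v = 1 := by
      rw [Finset.add_sum_erase F w hb, hw1]
    have := hw0 b hb
    linarith
  -- step 3 : ⌊x i⌋ = b i  and  frac x i = μ i
  have hbz : ∀ i, ∃ z : ℤ, b i = z := fun i => hF.2.1 b hb i
  have hfloor : ∀ i, (⌊x i⌋ : ℝ) = b i := by
    intro i
    obtain ⟨z, hz⟩ := hbz i
    have : ⌊x i⌋ = z := by
      rw [Int.floor_eq_iff]
      constructor
      · rw [hx i, hz]; linarith [hμ0 i]
      · rw [hx i, hz]; push_cast; linarith [hμ1 i]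
        
    rw [this, hz]
  have hfrac : ∀ i, x i - ⌊x i⌋ = μ i := by
    intro i; rw [hfloor i, hx i]; ring
  -- step 4 : T v > 0
  have hT0 : ∀ v ∈ F, 0 < T v := by
    intro v hv
    have hvm : v ∈ F.filter (fun u => v ≤ u) := Finset.mem_filter.2 ⟨hv, le_rfl⟩
    have := Finset.single_le_sum (f := w)
      (fun u hu => (hw0 u (Finset.mem_filter.1 hu).1).le) hvm
    have := hw0 v hv
    simp only [hTdef]
    linarith
  -- step 5 : v i = b i + 1 ↔ T v ≤ μ i
  have hupmono : ∀ u ∈ F, ∀ v ∈ F, u ≤ v → ∀ i, u i = b i + 1 → v i = b i + 1 := by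
    intro u hu v hv huv i hui
    rcases two_val hF hb hbot hv i with h | h
    · exfalso; have := huv i; rw [hui, h] at this; linarith
    · exact h
  have hstep5 : ∀ v ∈ F, ∀ i, (v i = b i + 1 ↔ T v ≤ μ i) := by
    intro v hv i
    constructor
    · intro h
      apply Finset.sum_le_sum_of_subset_of_nonneg
      · intro u hu
        rw [Finset.mem_filter] at hu ⊢
        exact ⟨hu.1, hupmono v hv u hu.1 hu.2 i h⟩
      · exact fun u hu _ => (hw0 u (Finset.mem_filter.1 hu).1).le
    · intro h
      by_contra hne
      have hvb : v i = b i := (two_val hF hb hbot hv i).resolve_right hne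
      have hsub : F.filter (fun u => u i = b i + 1) ⊆ (F.filter (fun u => v ≤ u)).erase v := by
        intro u hu
        rw [Finset.mem_filter] at hu
        have hune : u ≠ v := by
          intro he; rw [he, hvb] at hu; nlinarith [hu.2]
        have hvu : v ≤ u := by
          rcases hF.2.2.1 u hu.1 v hv with h' | h'
          · exfalso
            have := h' i
            rw [hu.2, hvb] at this; linarith
          · exact h'
        exact Finset.mem_erase.2 ⟨hune, Finset.mem_filter.2 ⟨hu.1, hvu⟩⟩
      have h1 : μ i ≤ ∑ u ∈ (F.filter (fun u => v ≤ u)).erase v, w u :=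
        Finset.sum_le_sum_of_subset_of_nonneg hsub
          (fun u hu _ => (hw0 u (Finset.mem_filter.1 (Finset.mem_of_mem_erase hu)).1).le)
      have hvm : v ∈ F.filter (fun u => v ≤ u) := Finset.mem_filter.2 ⟨hv, le_rfl⟩
      have h2 : w v + ∑ u ∈ (F.filter (fun u => v ≤ u)).erase v, w u = T v := by
        rw [hTdef]; exact Finset.add_sum_erase _ w hvm
      have := hw0 v hv
      linarith
  -- step 6 : v = thr x (T v)
  have hstep6 : ∀ v ∈ F, v = thr x (T v) := by
    intro v hv
    funext i
    simp only [thr]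
    rw [hfrac i, hfloor i]
    rcases two_val hF hb hbot hv i with h | h
    · rw [if_neg, h, add_zero]
      intro hc
      have := (hstep5 v hv i).2 hc
      rw [h] at this; linarith
    · rw [if_pos ((hstep5 v hv i).1 h), h]
  apply Set.Subset.antisymm
  -- F ⊆ thrSet x
  · intro v hv
    rw [Finset.mem_coe] at hv
    by_cases hA : ∃ i, T v ≤ μ i
    · have hAne : (Finset.univ.filter (fun i => T v ≤ μ i)).Nonempty := by
        obtain ⟨i, hi⟩ := hA
        exact ⟨i, Finset.mem_filter.2 ⟨Finset.mem_univ i, hi⟩⟩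
      set A := Finset.univ.filter (fun i => T v ≤ μ i) with hAdef
      have himne : (A.image μ).Nonempty := hAne.image μ
      set c := (A.image μ).min' himne with hcdef
      obtain ⟨i0, hi0A, hi0⟩ := Finset.mem_image.1 ((A.image μ).min'_mem himne)
      have hi0' : T v ≤ μ i0 := (Finset.mem_filter.1 hi0A).2
      have hcge : T v ≤ c := by rw [hcdef, ← hi0]; exact hi0'
      have hcmem : c ∈ thrC x := by
        refine Set.mem_insert_of_mem _ ⟨lt_of_lt_of_le (hT0 v hv) hcge, i0, ?_⟩
        rw [hfrac i0, hi0]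
      refine ⟨c, hcmem, ?_⟩
      rw [hstep6 v hv]
      funext i
      simp only [thr]
      rw [hfrac i]
      congr 1
      by_cases hi : T v ≤ μ i
      · rw [if_pos hi, if_pos]
        rw [hcdef]
        exact (A.image μ).min'_le (μ i)
          (Finset.mem_image_of_mem μ (Finset.mem_filter.2 ⟨Finset.mem_univ i, hi⟩))
      · rw [if_neg hi, if_neg]
        intro hc
        exact hi (le_trans hcge hc)
    · push_neg at hA
      refine ⟨1, Set.mem_insert 1 _, ?_⟩
      rw [hstep6 v hv]
      funext i
      simp only [thr]
      rw [hfrac i, if_neg (by intro h; linarith [hμ1 i]),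
        if_neg (by intro h; exact absurd h (not_le.2 (hA i)))]
  -- thrSet x ⊆ F
  · rintro _ ⟨c, hc, rfl⟩
    rcases hc with hc1 | ⟨hcpos, i0, hi0⟩
    · -- c = 1 : thr x 1 = b
      have : thr x c = b := by
        funext i
        simp only [thr]
        rw [hfrac i, hfloor i, if_neg (by rw [hc1]; intro h; linarith [hμ1 i]), add_zero]
      rw [this]; exact hb
    · rw [hfrac i0] at hi0
      set B := F.filter (fun v => v i0 = b i0 + 1) with hBdef
      have hBne : B.Nonempty := by
        by_contra hBe
        rw [Finset.not_nonempty_iff_eq_empty] at hBe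
        have : μ i0 = 0 := by rw [hμdef]; simp [← hBdef, hBe]
        rw [← hi0] at hcpos; rw [this] at hcpos; linarith
      obtain ⟨vs, hvsB, hvsmin⟩ := B.exists_minimal hBne
      have hvsF : vs ∈ F := (Finset.mem_filter.1 hvsB).1
      have hvsbot : ∀ u ∈ B, vs ≤ u := by
        intro u hu
        rcases hF.2.2.1 vs hvsF u (Finset.mem_filter.1 hu).1 with h | h
        · exact h
        · rcases eq_or_ne u vs with rfl | hne
          · exact le_rfl
          · exact absurd (le_antisymm h (hvsmin hu h)) hne
      have hTvs : T vs = μ i0 := by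
        apply le_antisymm
        · apply Finset.sum_le_sum_of_subset_of_nonneg
          · intro u hu
            rw [Finset.mem_filter] at hu
            refine Finset.mem_filter.2 ⟨hu.1, ?_⟩
            exact hupmono vs hvsF u hu.1 hu.2 i0 (Finset.mem_filter.1 hvsB).2
          · exact fun u hu _ => (hw0 u (Finset.mem_filter.1 hu).1).le
        · apply Finset.sum_le_sum_of_subset_of_nonneg
          · intro u hu
            exact Finset.mem_filter.2 ⟨(Finset.mem_filter.1 hu).1, hvsbot u hu⟩
          · exact fun u hu _ => (hw0 u (Finset.mem_filter.1 hu).1).le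
      have : thr x c = vs := by
        rw [← hi0, ← hTvs, ← hstep6 vs hvsF]
      rw [this]; exact hvsF


/-- The intersection property for good faces. -/
lemma goodFace_inter_subset {F G : Finset (Fin k → ℝ)} (hF : IsGoodFace F) (hG : IsGoodFace G) :
    convexHull ℝ ↑F ∩ convexHull ℝ ↑G ⊆ convexHull ℝ ((F : Set (Fin k → ℝ)) ∩ ↑G) := by
  classical
  rintro x ⟨hxF, hxG⟩
  rw [Finset.convexHull_eq] at hxF hxG
  obtain ⟨w, hw0, hw1, hwx⟩ := hxF
  obtain ⟨ω, hω0, hω1, hωx⟩ := hxG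
  set F' := F.filter (fun v => w v ≠ 0) with hF'def
  set G' := G.filter (fun v => ω v ≠ 0) with hG'def
  have hsumF' : ∑ v ∈ F', w v = 1 := by
    rw [hF'def, Finset.sum_filter_ne_zero, hw1]
  have hsumG' : ∑ v ∈ G', ω v = 1 := by
    rw [hG'def, Finset.sum_filter_ne_zero, hω1]
  have hF'ne : F'.Nonempty := by
    by_contra h
    rw [Finset.not_nonempty_iff_eq_empty] at h
    rw [h, Finset.sum_empty] at hsumF'
    norm_num at hsumF'
  have hG'ne : G'.Nonempty := by
    by_contra h
    rw [Finset.not_nonempty_iff_eq_empty] at h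
    rw [h, Finset.sum_empty] at hsumG'
    norm_num at hsumG'
  have hxF' : ∑ v ∈ F', w v • v = x := by
    rw [← hwx, Finset.centerMass_eq_of_sum_1 _ _ hw1, hF'def]
    refine Finset.sum_filter_of_ne fun v _ hne => ?_
    intro h0
    rw [h0, zero_smul] at hne
    exact hne rfl
  have hxG' : ∑ v ∈ G', ω v • v = x := by
    rw [← hωx, Finset.centerMass_eq_of_sum_1 _ _ hω1, hG'def]
    refine Finset.sum_filter_of_ne fun v _ hne => ?_
    intro h0
    rw [h0, zero_smul] at hne
    exact hne rfl
  have hw0' : ∀ v ∈ F', 0 < w v := fun v hv =>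
    lt_of_le_of_ne (hw0 v (Finset.mem_filter.1 hv).1) (Ne.symm (Finset.mem_filter.1 hv).2)
  have hω0' : ∀ v ∈ G', 0 < ω v := fun v hv =>
    lt_of_le_of_ne (hω0 v (Finset.mem_filter.1 hv).1) (Ne.symm (Finset.mem_filter.1 hv).2)
  have hFeq : (↑F' : Set (Fin k → ℝ)) = thrSet x := by
    rw [coe_eq_thrSet (hF.subset (Finset.filter_subset _ _) hF'ne) hw0' hsumF', hxF']
  have hGeq : (↑G' : Set (Fin k → ℝ)) = thrSet x := by
    rw [coe_eq_thrSet (hG.subset (Finset.filter_subset _ _) hG'ne) hω0' hsumG', hxG']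
  have hxmem : x ∈ convexHull ℝ (↑F' : Set (Fin k → ℝ)) := by
    rw [← hxF', ← Finset.centerMass_eq_of_sum_1 _ _ hsumF']
    exact F'.centerMass_mem_convexHull (fun v hv => (hw0' v hv).le)
      (by rw [hsumF']; norm_num) (fun v hv => Finset.mem_coe.2 hv)
  refine convexHull_mono ?_ hxmem
  intro v hv
  refine ⟨Finset.mem_coe.2 ((Finset.filter_subset _ _) (Finset.mem_coe.1 hv)), ?_⟩
  have : v ∈ thrSet x := hFeq ▸ hv
  rw [← hGeq] at this
  exact Finset.mem_coe.2 ((Finset.filter_subset _ _) (Finset.mem_coe.1 this))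

/-- previous element: largest element of `D` below `c`, or `0`. -/
def prevIn (D : Finset ℝ) (c : ℝ) : ℝ := WithBot.unbotD 0 (D.filter (fun d => d < c)).max

lemma prevIn_congr {D E : Finset ℝ} {c : ℝ}
    (h : ∀ d, (d ∈ D ∧ d < c) ↔ (d ∈ E ∧ d < c)) : prevIn D c = prevIn E c := by
  have he : D.filter (fun d => d < c) = E.filter (fun d => d < c) := by
    ext d
    simp only [Finset.mem_filter]
    exact h d
  rw [prevIn, prevIn, he]

lemma prevIn_le {D : Finset ℝ} {c : ℝ} (hc : 0 ≤ c) : prevIn D c ≤ c := by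
  rcases (D.filter (fun d => d < c)).eq_empty_or_nonempty with h | h
  · rw [prevIn, h]
    simpa using hc
  · rw [prevIn, ← Finset.coe_max' h, WithBot.unbotD_coe]
    exact (Finset.mem_filter.1 ((D.filter (fun d => d < c)).max'_mem h)).2.le

/-- Telescoping sum. -/
lemma tele (D : Finset ℝ) : ∑ c ∈ D, (c - prevIn D c) = WithBot.unbotD 0 D.max := by
  classical
  induction D using Finset.strongInduction with
  | _ D ih =>
    rcases D.eq_empty_or_nonempty with rfl | hne
    · simp
    · set M := D.max' hne with hM
      have hMD : M ∈ D := D.max'_mem hne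
      have hEM : D.erase M ⊂ D := Finset.erase_ssubset hMD
      have hprev : ∀ c ∈ D.erase M, prevIn D c = prevIn (D.erase M) c := by
        intro c hc
        have hcM : c < M := lt_of_le_of_ne (D.le_max' c (Finset.mem_of_mem_erase hc))
          (Finset.mem_erase.1 hc).1
        refine prevIn_congr fun d => ?_
        rw [Finset.mem_erase]
        constructor
        · rintro ⟨hd, hdc⟩
          exact ⟨⟨by rintro rfl; exact absurd hdc (not_lt.2 hcM.le), hd⟩, hdc⟩
        · rintro ⟨⟨_, hd⟩, hdc⟩
          exact ⟨hd, hdc⟩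
      have hfM : D.filter (fun d => d < M) = D.erase M := by
        ext d
        simp only [Finset.mem_filter, Finset.mem_erase]
        constructor
        · rintro ⟨hd, hdM⟩
          exact ⟨ne_of_lt hdM, hd⟩
        · rintro ⟨hd, hdD⟩
          exact ⟨hdD, lt_of_le_of_ne (D.le_max' d hdD) hd⟩
      rw [← Finset.add_sum_erase D _ hMD,
        Finset.sum_congr rfl (fun c hc => by rw [hprev c hc]), ih _ hEM]
      rw [← Finset.coe_max' hne, WithBot.unbotD_coe]
      rcases (D.erase M).eq_empty_or_nonempty with he | he
      · rw [he]
        simp only [Finset.max_empty, WithBot.unbotD_bot, add_zero]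
        rw [prevIn, hfM, he]
        simp [hM]
      · rw [← Finset.coe_max' he, WithBot.unbotD_coe, prevIn, hfM,
          ← Finset.coe_max' he, WithBot.unbotD_coe]
        ring

/-- The fractional values of `x`, as a finset. -/
def fracs (x : Fin k → ℝ) : Finset ℝ :=
  (Finset.univ.image (fun i => x i - ⌊x i⌋)).filter (fun c => 0 < c)

def Cfin (x : Fin k → ℝ) : Finset ℝ := insert 1 (fracs x)

def Ffin (x : Fin k → ℝ) : Finset (Fin k → ℝ) := (Cfin x).image (thr x)

lemma Cfin_pos {x : Fin k → ℝ} {c : ℝ} (hc : c ∈ Cfin x) : 0 < c := by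
  rcases Finset.mem_insert.1 hc with rfl | h
  · norm_num
  · exact (Finset.mem_filter.1 h).2

lemma Cfin_le_one {x : Fin k → ℝ} {c : ℝ} (hc : c ∈ Cfin x) : c ≤ 1 := by
  rcases Finset.mem_insert.1 hc with rfl | h
  · exact le_refl 1
  · obtain ⟨i, _, hi⟩ := Finset.mem_image.1 (Finset.mem_filter.1 h).1
    rw [← hi]
    linarith [Int.lt_floor_add_one (x i)]

lemma frac_nonneg (x : Fin k → ℝ) (i : Fin k) : 0 ≤ x i - ⌊x i⌋ :=
  sub_nonneg.2 (Int.floor_le (x i))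

lemma frac_lt_one (x : Fin k → ℝ) (i : Fin k) : x i - ⌊x i⌋ < 1 := by
  linarith [Int.lt_floor_add_one (x i)]

lemma goodFace_Ffin (x : Fin k → ℝ) : IsGoodFace (Ffin x) := by
  refine ⟨⟨thr x 1, Finset.mem_image_of_mem _ (Finset.mem_insert_self 1 _)⟩, ?_, ?_, ?_⟩
  · rintro v hv i
    obtain ⟨c, _, rfl⟩ := Finset.mem_image.1 hv
    by_cases h : c ≤ x i - ⌊x i⌋
    · exact ⟨⌊x i⌋ + 1, by rw [thr, if_pos h]; push_cast; ring⟩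
    · exact ⟨⌊x i⌋, by rw [thr, if_neg h, add_zero]⟩
  · rintro u hu v hv
    obtain ⟨c, _, rfl⟩ := Finset.mem_image.1 hu
    obtain ⟨c', _, rfl⟩ := Finset.mem_image.1 hv
    have key : ∀ a b : ℝ, a ≤ b → thr x b ≤ thr x a := by
      intro a b hab i
      simp only [thr]
      by_cases h : b ≤ x i - ⌊x i⌋
      · rw [if_pos h, if_pos (le_trans hab h)]
      · rw [if_neg h]
        have : (0:ℝ) ≤ if a ≤ x i - ⌊x i⌋ then 1 else 0 := by positivity
        linarith
    rcases le_total c c' with h | h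
    · right; exact key c c' h
    · left; exact key c' c h
  · rintro u hu v hv i
    obtain ⟨c, _, rfl⟩ := Finset.mem_image.1 hu
    obtain ⟨c', _, rfl⟩ := Finset.mem_image.1 hv
    simp only [thr]
    have h1 : (0:ℝ) ≤ if c ≤ x i - ⌊x i⌋ then 1 else 0 := by positivity
    have h2 : (if c ≤ x i - ⌊x i⌋ then (1:ℝ) else 0) ≤ 1 := by
      split <;> norm_num
    have h3 : (0:ℝ) ≤ if c' ≤ x i - ⌊x i⌋ then 1 else 0 := by positivity
    have h4 : (if c' ≤ x i - ⌊x i⌋ then (1:ℝ) else 0) ≤ 1 := by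
      split <;> norm_num
    rw [abs_le]
    constructor <;> linarith

lemma sum_w_filter (x : Fin k → ℝ) (a : ℝ) :
    ∑ c ∈ (Cfin x).filter (fun c => c ≤ a), (c - prevIn (Cfin x) c)
      = WithBot.unbotD 0 ((Cfin x).filter (fun c => c ≤ a)).max := by
  classical
  set D := (Cfin x).filter (fun c => c ≤ a) with hD
  have hpc : ∀ c ∈ D, prevIn (Cfin x) c = prevIn D c := by
    intro c hc
    have hca : c ≤ a := (Finset.mem_filter.1 hc).2
    refine prevIn_congr fun d => ?_
    rw [hD, Finset.mem_filter]
    constructor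
    · rintro ⟨hd, hdc⟩
      exact ⟨⟨hd, le_trans hdc.le hca⟩, hdc⟩
    · rintro ⟨⟨hd, _⟩, hdc⟩
      exact ⟨hd, hdc⟩
  rw [Finset.sum_congr rfl (fun c hc => by rw [hpc c hc]), tele]

lemma sum_w_one (x : Fin k → ℝ) : ∑ c ∈ Cfin x, (c - prevIn (Cfin x) c) = 1 := by
  have hfull : (Cfin x).filter (fun c => c ≤ (1:ℝ)) = Cfin x :=
    Finset.filter_true_of_mem fun c hc => Cfin_le_one hc
  have h := sum_w_filter x 1
  rw [hfull] at h
  rw [h]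
  have hne : (Cfin x).Nonempty := ⟨1, Finset.mem_insert_self 1 _⟩
  rw [← Finset.coe_max' hne, WithBot.unbotD_coe]
  exact le_antisymm ((Cfin x).max'_le hne _ fun c hc => Cfin_le_one hc)
    ((Cfin x).le_max' 1 (Finset.mem_insert_self 1 _))

set_option maxHeartbeats 1000000 in
lemma mem_convexHull_Ffin (x : Fin k → ℝ) : x ∈ convexHull ℝ (↑(Ffin x) : Set (Fin k → ℝ)) := by
  classical
  set w : ℝ → ℝ := fun c => c - prevIn (Cfin x) c with hw
  have hw0 : ∀ c ∈ Cfin x, 0 ≤ w c := by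
    intro c hc
    have h := prevIn_le (D := Cfin x) (Cfin_pos hc).le
    simp only [hw]
    linarith
  have hsum : ∑ c ∈ Cfin x, w c = 1 := sum_w_one x
  have hcoord : ∀ i, ∑ c ∈ Cfin x, w c * thr x c i = x i := by
    intro i
    have hterm : ∀ c ∈ Cfin x, w c * thr x c i
        = w c * ⌊x i⌋ + (if c ≤ x i - ⌊x i⌋ then w c else 0) := by
      intro c hc
      rw [thr]
      by_cases h : c ≤ x i - ⌊x i⌋
      · rw [if_pos h, if_pos h]; ring
      · rw [if_neg h, if_neg h]; ring
    rw [Finset.sum_congr rfl hterm, Finset.sum_add_distrib, ← Finset.sum_mul, hsum, one_mul,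
      ← Finset.sum_filter, sum_w_filter x (x i - ⌊x i⌋)]
    by_cases h : 0 < x i - ⌊x i⌋
    · have hmem : x i - ⌊x i⌋ ∈ (Cfin x).filter (fun c => c ≤ x i - ⌊x i⌋) := by
        refine Finset.mem_filter.2 ⟨Finset.mem_insert_of_mem ?_, le_rfl⟩
        exact Finset.mem_filter.2 ⟨Finset.mem_image_of_mem _ (Finset.mem_univ i), h⟩
      have hne : ((Cfin x).filter (fun c => c ≤ x i - ⌊x i⌋)).Nonempty := ⟨_, hmem⟩
      rw [← Finset.coe_max' hne, WithBot.unbotD_coe]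
      have : ((Cfin x).filter (fun c => c ≤ x i - ⌊x i⌋)).max' hne = x i - ⌊x i⌋ :=
        le_antisymm (Finset.max'_le _ hne _ fun c hc => (Finset.mem_filter.1 hc).2)
          (Finset.le_max' _ _ hmem)
      rw [this]; ring
    · have hempty : (Cfin x).filter (fun c => c ≤ x i - ⌊x i⌋) = ∅ := by
        rw [Finset.filter_eq_empty_iff]
        intro c hc
        push_neg
        calc x i - ⌊x i⌋ ≤ 0 := le_of_not_gt h
        _ < c := Cfin_pos hc
      rw [hempty]
      simp only [Finset.max_empty, WithBot.unbotD_bot, add_zero]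
      have : x i - ⌊x i⌋ = 0 := le_antisymm (le_of_not_gt h) (frac_nonneg x i)
      linarith
  have hcm : (Cfin x).centerMass w (thr x) = x := by
    rw [Finset.centerMass_eq_of_sum_1 _ _ hsum]
    funext i
    rw [Finset.sum_apply]
    simp only [Pi.smul_apply, smul_eq_mul]
    exact hcoord i
  have hmem : (Cfin x).centerMass w (thr x) ∈ convexHull ℝ (↑(Ffin x) : Set (Fin k → ℝ)) :=
    (Cfin x).centerMass_mem_convexHull hw0 (by rw [hsum]; norm_num)
      (fun c hc => Finset.mem_coe.2 (Finset.mem_image_of_mem _ hc))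
  rwa [hcm] at hmem

lemma Ffin_close (x : Fin k → ℝ) {v : Fin k → ℝ} (hv : v ∈ Ffin x) (i : Fin k) :
    |v i - x i| < 1 ∧ ((0:ℝ) ≤ x i → 0 ≤ v i) ∧ (∀ N : ℕ, x i ≤ N → v i ≤ N) := by
  obtain ⟨c, hc, rfl⟩ := Finset.mem_image.1 hv
  have hcpos := Cfin_pos hc
  have hf0 := frac_nonneg x i
  have hf1 := frac_lt_one x i
  have hfl := Int.floor_le (x i)
  by_cases h : c ≤ x i - ⌊x i⌋
  · have hfpos : 0 < x i - ⌊x i⌋ := lt_of_lt_of_le hcpos h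
    rw [thr, if_pos h]
    refine ⟨by rw [abs_lt]; constructor <;> linarith, fun h0 => by positivity, fun N hN => ?_⟩
    have hxN : x i < N := by
      rcases lt_or_eq_of_le hN with h' | h'
      · exact h'
      · exfalso
        have hfl' : ⌊x i⌋ = (N : ℤ) := by rw [h']; exact_mod_cast Int.floor_natCast N
        rw [hfl'] at hfpos
        push_cast at hfpos
        rw [h'] at hfpos
        linarith
    have hZ : ⌊x i⌋ + 1 ≤ (N : ℤ) := by
      have : ⌊x i⌋ < (N : ℤ) := by
        rw [Int.floor_lt]
        push_cast
        exact hxN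
      omega
    calc (⌊x i⌋ : ℝ) + 1 ≤ ((N : ℤ) : ℝ) := by exact_mod_cast hZ
    _ = N := by push_cast; ring
  · rw [thr, if_neg h, add_zero]
    refine ⟨by rw [abs_lt]; constructor <;> linarith, fun h0 => ?_, fun N hN => by linarith⟩
    exact_mod_cast Int.floor_nonneg.2 h0

/-- Good faces are affinely independent. -/
lemma goodFace_affineIndependent {F : Finset (Fin k → ℝ)} (hF : IsGoodFace F) :
    AffineIndependent ℝ ((↑) : F → (Fin k → ℝ)) := by
  classical
  obtain ⟨b, hb, hbot⟩ := exists_bot hF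
  rw [affineIndependent_iff]
  intro t w hsum hcomb
  by_contra hne
  push_neg at hne
  obtain ⟨e0, he0t, he0⟩ := hne
  set s0 := t.filter (fun e => w e ≠ 0) with hs0
  have hs0ne : s0.Nonempty := ⟨e0, Finset.mem_filter.2 ⟨he0t, he0⟩⟩
  obtain ⟨emax, hemax, hmax⟩ := s0.exists_maximal hs0ne
  have hcmp : ∀ u ∈ s0, u ≤ emax := by
    intro u hu
    rcases hF.2.2.1 (u : Fin k → ℝ) u.2 (emax : Fin k → ℝ) emax.2 with h | h
    · exact fun i => h i
    · rcases eq_or_ne emax u with rfl | hne'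
      · exact le_rfl
      · exact hmax hu (fun i => h i)
  have hwzero : ∀ e ∈ t, e ∉ s0 → w e = 0 := by
    intro e het hes
    by_contra h
    exact hes (Finset.mem_filter.2 ⟨het, h⟩)
  -- case: support has ≥ 2 elements, or exactly one
  by_cases hsingle : ∀ u ∈ s0, u = emax
  · -- sum of weights is w emax ≠ 0, contradicting hsum
    have : ∑ e ∈ t, w e = w emax := by
      rw [Finset.sum_eq_single_of_mem (emax : {x // x ∈ F}) (Finset.mem_filter.1 hemax).1]
      intro e het hneq
      by_contra h
      exact hneq (hsingle e (Finset.mem_filter.2 ⟨het, h⟩))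
    rw [hsum] at this
    exact (Finset.mem_filter.1 hemax).2 this.symm
  · push_neg at hsingle
    obtain ⟨u0, hu0s, hu0ne⟩ := hsingle
    -- the predecessor: maximum of s0.erase emax
    set s1 := s0.erase emax with hs1
    have hs1ne : s1.Nonempty := ⟨u0, Finset.mem_erase.2 ⟨hu0ne, hu0s⟩⟩
    obtain ⟨upre, hupre, hpre⟩ := s1.exists_maximal hs1ne
    have hcmp1 : ∀ u ∈ s1, u ≤ upre := by
      intro u hu
      rcases hF.2.2.1 (u : Fin k → ℝ) u.2 (upre : Fin k → ℝ) upre.2 with h | h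
      · exact fun i => h i
      · rcases eq_or_ne upre u with rfl | hne'
        · exact le_rfl
        · exact hpre hu (fun i => h i)
    have hupre_le : upre ≤ emax := hcmp upre (Finset.mem_of_mem_erase hupre)
    have hupre_ne : (upre : {x // x ∈ F}) ≠ emax := (Finset.mem_erase.1 hupre).1
    -- pick a coordinate where they differ
    have : ∃ i, (upre : Fin k → ℝ) i < (emax : Fin k → ℝ) i := by
      by_contra h
      push_neg at h
      apply hupre_ne
      apply Subtype.ext
      funext i
      exact le_antisymm (hupre_le i) (h i)
    obtain ⟨i, hi⟩ := this
    have hval_pre : (upre : Fin k → ℝ) i = b i := by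
      rcases two_val hF hb hbot upre.2 i with h | h
      · exact h
      · exfalso
        rcases two_val hF hb hbot emax.2 i with h' | h'
        · rw [h, h'] at hi; linarith
        · rw [h, h'] at hi; linarith
    have hval_max : (emax : Fin k → ℝ) i = b i + 1 := by
      rcases two_val hF hb hbot emax.2 i with h' | h'
      · exfalso; rw [hval_pre, h'] at hi; linarith
      · exact h'
    -- coordinate i equation
    have hcoord : ∑ e ∈ t, w e * ((e : Fin k → ℝ) i - b i) = 0 := by
      have h1 : ∑ e ∈ t, w e * (e : Fin k → ℝ) i = 0 := by
        have h := congrFun hcomb i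
        rw [Finset.sum_apply] at h
        simpa [smul_eq_mul] using h
      have h2 : ∑ e ∈ t, w e * b i = 0 := by
        rw [← Finset.sum_mul, hsum, zero_mul]
      have h3 : ∀ e ∈ t, w e * ((e : Fin k → ℝ) i - b i)
          = w e * (e : Fin k → ℝ) i - w e * b i := fun e _ => by ring
      rw [Finset.sum_congr rfl h3, Finset.sum_sub_distrib, h1, h2, sub_zero]
    -- every term vanishes except emax's, whose increment is 1
    have hterm : ∀ e ∈ t, w e * ((e : Fin k → ℝ) i - b i)
        = if e = emax then w emax else 0 := by
      intro e het
      by_cases hee : e = emax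
      · rw [if_pos hee, hee, hval_max]; ring
      · rw [if_neg hee]
        by_cases hws : w e = 0
        · rw [hws]; ring
        · have hes0 : e ∈ s0 := Finset.mem_filter.2 ⟨het, hws⟩
          have hes1 : e ∈ s1 := Finset.mem_erase.2 ⟨hee, hes0⟩
          have : (e : Fin k → ℝ) i = b i := by
            rcases two_val hF hb hbot e.2 i with h | h
            · exact h
            · exfalso
              have := hcmp1 e hes1 i
              rw [h, hval_pre] at this
              linarith
          rw [this]; ring
    rw [Finset.sum_congr rfl hterm, Finset.sum_ite_eq' t emax (fun _ => w emax),
      if_pos (Finset.mem_filter.1 hemax).1] at hcoord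
    exact (Finset.mem_filter.1 hemax).2 hcoord

/-! ### The grid complex at scale `1/m` -/

/-- Scaling map. -/
def scl (m : ℕ) : (Fin k → ℝ) → (Fin k → ℝ) := fun v => (m : ℝ) • v

lemma scl_injective {m : ℕ} (hm : 0 < m) : Function.Injective (scl (k := k) m) := by
  intro u v h
  have hm' : (m : ℝ) ≠ 0 := by positivity
  funext i
  have := congrFun h i
  simp only [scl, Pi.smul_apply, smul_eq_mul] at this
  exact mul_left_cancel₀ hm' this

lemma mem_convexHull_scl {m : ℕ} (hm : 0 < m) {A : Set (Fin k → ℝ)} {x : Fin k → ℝ} :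
    x ∈ convexHull ℝ A ↔ scl m x ∈ convexHull ℝ (scl (k := k) m '' A) := by
  have hm' : (m : ℝ) ≠ 0 := by positivity
  have himg : scl (k := k) m '' A = (m : ℝ) • A := by
    rw [← Set.image_smul]; rfl
  rw [himg, convexHull_smul]
  exact (Set.smul_mem_smul_set_iff₀ hm' _ x).symm

/-- The Kuhn-type simplicial complex with grid scale `1/m` and vertices in `S`. -/
def gridComplex (k m : ℕ) (hm : 0 < m) (S : Set (Fin k → ℝ)) :
    Geometry.SimplicialComplex ℝ (Fin k → ℝ) where
  faces := {F | F.Nonempty ∧ ↑F ⊆ S ∧ IsGoodFace (F.image (scl m))}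
  indep := by
    rintro F ⟨hne, hFS, hgood⟩
    have hind := goodFace_affineIndependent hgood
    have hemb : ∀ v : {x // x ∈ F}, scl m (v : Fin k → ℝ) ∈ F.image (scl m) :=
      fun v => Finset.mem_image_of_mem _ v.2
    let e : {x // x ∈ F} ↪ {x // x ∈ F.image (scl m)} :=
      ⟨fun v => ⟨scl m (v : Fin k → ℝ), hemb v⟩, by
        intro u v h
        exact Subtype.ext (scl_injective hm (congrArg Subtype.val h))⟩
    have h2 := hind.comp_embedding e
    have h3 : ((↑) : {x // x ∈ F.image (scl m)} → (Fin k → ℝ)) ∘ e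
        = (AffineMap.homothety (0 : Fin k → ℝ) (m : ℝ)) ∘ ((↑) : {x // x ∈ F} → (Fin k → ℝ)) := by
      funext v
      simp [e, scl, AffineMap.homothety_apply]
    rw [h3] at h2
    exact AffineIndependent.of_comp _ h2
  isRelLowerSet_faces := by
    rintro F ⟨hne, hFS, hgood⟩
    refine ⟨hne, fun G hGF hGne' => ?_⟩
    refine ⟨hGne', fun v hv => hFS (hGF hv), ?_⟩
    refine hgood.subset (Finset.image_subset_image hGF) ?_
    exact hGne'.image _
  inter_subset_convexHull := by
    rintro F G ⟨hFne, hFS, hFgood⟩ ⟨hGne, hGS, hGgood⟩ x ⟨hxF, hxG⟩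
    have h1 : scl m x ∈ convexHull ℝ (↑(F.image (scl m)) : Set (Fin k → ℝ)) := by
      rw [Finset.coe_image]
      exact (mem_convexHull_scl hm).1 hxF
    have h2 : scl m x ∈ convexHull ℝ (↑(G.image (scl m)) : Set (Fin k → ℝ)) := by
      rw [Finset.coe_image]
      exact (mem_convexHull_scl hm).1 hxG
    have h3 := goodFace_inter_subset hFgood hGgood ⟨h1, h2⟩
    rw [Finset.coe_image, Finset.coe_image,
      ← Set.image_inter (scl_injective hm)] at h3
    exact (mem_convexHull_scl hm).2 h3

lemma gridComplex_faces_finite {k m : ℕ} (hm : 0 < m) {S : Set (Fin k → ℝ)}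
    (hS : S.Finite) : (gridComplex k m hm S).faces.Finite := by
  classical
  refine Set.Finite.subset (hS.toFinset.powerset : Finset (Finset (Fin k → ℝ))).finite_toSet ?_
  rintro F ⟨_, hFS, _⟩
  rw [Finset.mem_coe, Finset.mem_powerset]
  intro v hv
  exact hS.mem_toFinset.2 (hFS hv)

/-- Points of the complex are within `1/m` (sup-norm) of a vertex in `S`. -/
lemma gridComplex_space_close {k m : ℕ} (hm : 0 < m) {S : Set (Fin k → ℝ)}
    {x : Fin k → ℝ} (hx : x ∈ (gridComplex k m hm S).space) :
    ∃ v ∈ S, ∀ i, |x i - v i| ≤ 1 / m := by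
  rw [Geometry.SimplicialComplex.mem_space_iff] at hx
  obtain ⟨F, ⟨hFne, hFS, hFgood⟩, hxF⟩ := hx
  obtain ⟨v, hvF⟩ := hFne
  refine ⟨v, hFS hvF, ?_⟩
  have hm' : (0:ℝ) < m := by positivity
  have hB : Convex ℝ {z : Fin k → ℝ | ∀ i, z i ∈ Set.Icc (v i - 1/m) (v i + 1/m)} := by
    have : {z : Fin k → ℝ | ∀ i, z i ∈ Set.Icc (v i - 1/m) (v i + 1/m)}
        = Set.pi Set.univ (fun i => Set.Icc (v i - 1/m) (v i + 1/m)) := by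
      ext z
      simp only [Set.mem_setOf_eq, Set.mem_pi, Set.mem_univ, forall_true_left, Set.mem_Icc,
        Set.pi_univ_Icc]
      constructor
      · intro h
        constructor <;> intro i
        · linarith [(h i).1, (h i).2]
        · linarith [(h i).1, (h i).2]
      · intro h i
        constructor
        · linarith [h.1 i, h.2 i]
        · linarith [h.1 i, h.2 i]
    rw [this]
    exact convex_pi fun i _ => convex_Icc _ _
  have hsub : (↑F : Set (Fin k → ℝ)) ⊆ {z | ∀ i, z i ∈ Set.Icc (v i - 1/m) (v i + 1/m)} := by
    intro u hu i
    have hgd := hFgood.2.2.2 (scl m u) (Finset.mem_image_of_mem _ hu)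
      (scl m v) (Finset.mem_image_of_mem _ hvF) i
    simp only [scl, Pi.smul_apply, smul_eq_mul] at hgd
    rw [show (m:ℝ) * u i - m * v i = m * (u i - v i) by ring, abs_mul, abs_of_pos hm'] at hgd
    have : |u i - v i| ≤ 1/m := by
      rw [le_div_iff₀ hm', mul_comm]
      exact hgd
    rw [abs_le] at this
    constructor <;> linarith [this.1, this.2]
  have hxB := convexHull_min hsub hB hxF
  intro i
  have := hxB i
  rw [abs_le]
  constructor <;> [linarith [this.1]; linarith [this.2]]

/-- The complex is contained in the convex region `C` if all vertices are. -/
lemma gridComplex_space_subset {k m : ℕ} (hm : 0 < m) {S : Set (Fin k → ℝ)}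
    {C : Set (Fin k → ℝ)} (hC : Convex ℝ C) (hSC : S ⊆ C) :
    (gridComplex k m hm S).space ⊆ C := by
  intro x hx
  rw [Geometry.SimplicialComplex.mem_space_iff] at hx
  obtain ⟨F, ⟨hFne, hFS, hFgood⟩, hxF⟩ := hx
  exact convexHull_min (fun u hu => hSC (hFS hu)) hC hxF

/-- Coverage: any cube point whose `1/m`-grid neighbours all lie in `S` is in the space. -/
lemma gridComplex_space_cover {k m : ℕ} (hm : 0 < m) {S : Set (Fin k → ℝ)}
    {p : Fin k → ℝ} (hp : ∀ i, p i ∈ Set.Icc (0:ℝ) 1)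
    (hcov : ∀ v : Fin k → ℝ, (∀ i, ∃ z : ℤ, (m:ℝ) * v i = z) → (∀ i, v i ∈ Set.Icc (0:ℝ) 1) →
      (∀ i, |v i - p i| < 1 / m) → v ∈ S) :
    p ∈ (gridComplex k m hm S).space := by
  classical
  have hm' : (0:ℝ) < m := by positivity
  have hm'' : (m:ℝ) ≠ 0 := ne_of_gt hm'
  set xs : Fin k → ℝ := scl m p with hxs
  set F0 : Finset (Fin k → ℝ) := (Ffin xs).image (fun u => (m : ℝ)⁻¹ • u) with hF0
  have himg : F0.image (scl m) = Ffin xs := by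
    rw [hF0, Finset.image_image]
    have : (scl (k := k) m ∘ fun u => (m : ℝ)⁻¹ • u) = id := by
      funext u
      simp [scl, smul_smul, hm'']
    rw [this, Finset.image_id]
  have hgood0 := goodFace_Ffin xs
  have hF0ne : F0.Nonempty := by
    obtain ⟨u, hu⟩ := hgood0.1
    exact ⟨(m:ℝ)⁻¹ • u, Finset.mem_image_of_mem _ hu⟩
  have hF0S : (↑F0 : Set (Fin k → ℝ)) ⊆ S := by
    intro v hv
    rw [Finset.mem_coe, hF0, Finset.mem_image] at hv
    obtain ⟨u, hu, rfl⟩ := hv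
    have hclose := Ffin_close xs hu
    apply hcov
    · intro i
      obtain ⟨z, hz⟩ := hgood0.2.1 u hu i
      exact ⟨z, by simp only [Pi.smul_apply, smul_eq_mul]; rw [← hz]; field_simp⟩
    · intro i
      have h1 : (0:ℝ) ≤ xs i := by
        simp only [hxs, scl, Pi.smul_apply, smul_eq_mul]
        exact mul_nonneg hm'.le (hp i).1
      have h2 : xs i ≤ (m : ℕ) := by
        simp only [hxs, scl, Pi.smul_apply, smul_eq_mul]
        calc (m:ℝ) * p i ≤ m * 1 := by
              have := (hp i).2
              nlinarith
        _ = (m:ℕ) := by push_cast; ring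
      have h3 := (hclose i).2.1 h1
      have h4 := (hclose i).2.2 m h2
      constructor
      · simp only [Pi.smul_apply, smul_eq_mul]
        positivity
      · simp only [Pi.smul_apply, smul_eq_mul]
        rw [inv_mul_le_iff₀ hm']
        calc u i ≤ (m:ℕ) := h4
        _ = (m:ℝ) * 1 := by push_cast; ring
    · intro i
      have h1 := (hclose i).1
      have : xs i = m * p i := by simp [hxs, scl]
      rw [this] at h1
      simp only [Pi.smul_apply, smul_eq_mul]
      rw [show (m:ℝ)⁻¹ * u i - p i = (m:ℝ)⁻¹ * (u i - m * p i) by field_simp, abs_mul,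
        abs_of_pos (by positivity : (0:ℝ) < (m:ℝ)⁻¹)]
      calc (m:ℝ)⁻¹ * |u i - m * p i| < (m:ℝ)⁻¹ * 1 :=
            mul_lt_mul_of_pos_left h1 (by positivity)
      _ = 1 / m := by field_simp
  have hF0faces : F0 ∈ (gridComplex k m hm S).faces := ⟨hF0ne, hF0S, by rw [himg]; exact hgood0⟩
  rw [Geometry.SimplicialComplex.mem_space_iff]
  refine ⟨F0, hF0faces, ?_⟩
  rw [mem_convexHull_scl hm (A := (↑F0 : Set (Fin k → ℝ)))]
  rw [← Finset.coe_image, himg]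
  exact mem_convexHull_Ffin xs

end KuhnCore

namespace KuhnGlue

open KuhnCore Finset Set Pointwise

/-- coordinates map `I^∞ → ℝ^k`. -/
def cdk (k : ℕ) : Iinf → (Fin k → ℝ) := fun y i => (y (i : ℕ) : ℝ)

lemma cdk_continuous (k : ℕ) : Continuous (cdk k) :=
  continuous_pi fun i => continuous_subtype_val.comp (continuous_apply (i : ℕ))

/-- Candidate vertex set. -/
def Sset (X : Set Iinf) (k m : ℕ) : Set (Fin k → ℝ) :=
  {v | (∀ i, ∃ z : ℤ, (m:ℝ) * v i = z) ∧ (∀ i, v i ∈ Set.Icc (0:ℝ) 1) ∧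
    ∃ x ∈ X, ∀ i, |v i - ((x (i : ℕ) : ℝ))| < 2 / m}

lemma Sset_finite (X : Set Iinf) (k m : ℕ) (hm : 0 < m) : (Sset X k m).Finite := by
  have hm' : (0:ℝ) < m := by positivity
  have hbig : Sset X k m ⊆ Set.pi Set.univ
      (fun _ : Fin k => (fun z : ℤ => (z : ℝ) / m) '' (Set.Icc 0 (m : ℤ))) := by
    rintro v ⟨hint, hcube, _⟩ i _
    obtain ⟨z, hz⟩ := hint i
    refine ⟨z, ?_, ?_⟩
    · constructor
      · have : (0:ℝ) ≤ z := by rw [← hz]; exact mul_nonneg hm'.le (hcube i).1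
        exact_mod_cast this
      · have : (z:ℝ) ≤ m := by
          rw [← hz]
          calc (m:ℝ) * v i ≤ m * 1 := by nlinarith [(hcube i).2]
          _ = m := by ring
        exact_mod_cast this
    · show ((z:ℝ)) / m = v i
      rw [div_eq_iff (ne_of_gt hm')]
      linarith [hz]
  exact Set.Finite.subset (Set.Finite.pi fun _ => Set.Finite.image _ (Set.finite_Icc _ _)) hbig

/-- The polyhedral neighbourhood in `I^∞`. -/
def PP (X : Set Iinf) (k m : ℕ) (hm : 0 < m) : Set Iinf :=
  {y ∈ cubeFin k | cdk k y ∈ (gridComplex k m hm (Sset X k m)).space}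

lemma covS (X : Set Iinf) (k m : ℕ) (hm : 0 < m) {p : Fin k → ℝ}
    (hp : ∀ i, p i ∈ Set.Icc (0:ℝ) 1)
    (hnear : ∃ x ∈ X, ∀ i : Fin k, |p i - ((x (i:ℕ) : ℝ))| < 1 / m) :
    p ∈ (gridComplex k m hm (Sset X k m)).space := by
  obtain ⟨x, hxX, hx⟩ := hnear
  refine gridComplex_space_cover hm hp ?_
  intro v hint hcube hclose
  refine ⟨hint, hcube, x, hxX, fun i => ?_⟩
  calc |v i - ((x (i:ℕ) : ℝ))| ≤ |v i - p i| + |p i - (x (i:ℕ) : ℝ)| := abs_sub_le _ _ _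
  _ < 1/m + 1/m := add_lt_add (hclose i) (hx i)
  _ = 2/m := by ring

lemma closeS (X : Set Iinf) (k m : ℕ) (hm : 0 < m) {q : Fin k → ℝ}
    (hq : q ∈ (gridComplex k m hm (Sset X k m)).space) :
    ∃ x ∈ X, ∀ i : Fin k, |q i - ((x (i:ℕ) : ℝ))| < 3 / m := by
  obtain ⟨v, ⟨_, _, x, hxX, hvx⟩, hqv⟩ := gridComplex_space_close hm hq
  refine ⟨x, hxX, fun i => ?_⟩
  calc |q i - ((x (i:ℕ) : ℝ))| ≤ |q i - v i| + |v i - (x (i:ℕ) : ℝ)| := abs_sub_le _ _ _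
  _ < 1/m + 2/m := add_lt_add_of_le_of_lt (hqv i) (hvx i)
  _ = 3/m := by ring

lemma convex_cube (k : ℕ) : Convex ℝ {z : Fin k → ℝ | ∀ i, z i ∈ Set.Icc (0:ℝ) 1} := by
  have : {z : Fin k → ℝ | ∀ i, z i ∈ Set.Icc (0:ℝ) 1}
      = Set.pi Set.univ (fun _ : Fin k => Set.Icc (0:ℝ) 1) := by
    ext z
    simp only [Set.mem_setOf_eq, Set.mem_pi, Set.mem_univ, forall_true_left, Set.mem_Icc,
      Set.pi_univ_Icc]
    constructor
    · intro h
      constructor <;> intro i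
      · exact (h i).1
      · exact (h i).2
    · intro h i
      exact ⟨h.1 i, h.2 i⟩
  rw [this]
  exact convex_pi fun i _ => convex_Icc _ _

lemma cubeS (X : Set Iinf) (k m : ℕ) (hm : 0 < m) {q : Fin k → ℝ}
    (hq : q ∈ (gridComplex k m hm (Sset X k m)).space) : ∀ i, q i ∈ Set.Icc (0:ℝ) 1 :=
  gridComplex_space_subset hm (convex_cube k) (fun v hv => hv.2.1) hq

lemma isClosed_cubeFin (k : ℕ) : IsClosed (cubeFin k) := by
  have h : cubeFin k = ⋂ i, {x : Iinf | k ≤ i → x i = 0} := by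
    ext x
    simp [cubeFin]
  rw [h]
  refine isClosed_iInter fun i => ?_
  by_cases hki : k ≤ i
  · have : {x : Iinf | k ≤ i → x i = 0} = (fun x : Iinf => x i) ⁻¹' {0} := by
      ext x
      simp [hki]
    rw [this]
    exact IsClosed.preimage (continuous_apply i) isClosed_singleton
  · have : {x : Iinf | k ≤ i → x i = 0} = Set.univ := by
      ext x
      simp [hki]
    rw [this]
    exact isClosed_univ

lemma space_isCompact (X : Set Iinf) (k m : ℕ) (hm : 0 < m) :
    IsCompact (gridComplex k m hm (Sset X k m)).space := by
  have hfin := gridComplex_faces_finite hm (Sset_finite X k m hm)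
  rw [Geometry.SimplicialComplex.space]
  exact hfin.isCompact_biUnion fun F _ => (F.finite_toSet).isCompact_convexHull ℝ

lemma PP_isCompact (X : Set Iinf) (k m : ℕ) (hm : 0 < m) : IsCompact (PP X k m hm) := by
  have hclosed : IsClosed (PP X k m hm) := by
    have : PP X k m hm = cubeFin k ∩ cdk k ⁻¹' (gridComplex k m hm (Sset X k m)).space := rfl
    rw [this]
    exact (isClosed_cubeFin k).inter
      (IsClosed.preimage (cdk_continuous k) (space_isCompact X k m hm).isClosed)
  exact hclosed.isCompact

lemma PP_image (X : Set Iinf) (k m : ℕ) (hm : 0 < m) :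
    cdk k '' PP X k m hm = (gridComplex k m hm (Sset X k m)).space := by
  apply Set.Subset.antisymm
  · rintro _ ⟨y, hy, rfl⟩
    exact hy.2
  · intro q hq
    have hcube := cubeS X k m hm hq
    refine ⟨fun i => if h : i < k then ⟨q ⟨i, h⟩, hcube ⟨i, h⟩⟩ else 0, ⟨?_, ?_⟩, ?_⟩
    · intro i hi
      exact dif_neg (by omega)
    · have : cdk k (fun i => if h : i < k then (⟨q ⟨i, h⟩, hcube ⟨i, h⟩⟩ : unitInterval) else 0)
          = q := by
        funext i
        simp only [cdk]
        rw [dif_pos i.2]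
      rw [this]
      exact hq
    · funext i
      simp only [cdk]
      rw [dif_pos i.2]

/-- The open neighbourhood used for interiors. -/
def UU (X : Set Iinf) (k : ℕ) (c : ℝ) : Set Iinf :=
  ⋃ x ∈ X, {z : Iinf | ∀ i : Fin k, |((z (i:ℕ) : ℝ)) - ((x (i:ℕ) : ℝ))| < c}

lemma UU_open (X : Set Iinf) (k : ℕ) (c : ℝ) : IsOpen (UU X k c) := by
  refine isOpen_biUnion fun x _ => ?_
  have h : {z : Iinf | ∀ i : Fin k, |((z (i:ℕ) : ℝ)) - ((x (i:ℕ) : ℝ))| < c}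
      = ⋂ i ∈ (Finset.univ : Finset (Fin k)),
        (fun z : Iinf => (z (i:ℕ) : ℝ)) ⁻¹' Metric.ball ((x (i:ℕ) : ℝ)) c := by
    ext z
    simp [Metric.mem_ball, Real.dist_eq]
  rw [h]
  refine isOpen_biInter_finset fun i _ => ?_
  exact IsOpen.preimage (continuous_subtype_val.comp (continuous_apply (i:ℕ))) Metric.isOpen_ball

lemma mem_UU_self (X : Set Iinf) (k : ℕ) {c : ℝ} (hc : 0 < c) {x : Iinf} (hx : x ∈ X) :
    x ∈ UU X k c := by
  refine Set.mem_biUnion hx ?_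
  intro i
  simp [hc]

lemma UU_subset_cyl (X : Set Iinf) (k m : ℕ) (hm : 0 < m) :
    UU X k (1/m) ⊆ cyl k (PP X k m hm) := by
  rintro z hz
  simp only [UU, Set.mem_iUnion, Set.mem_setOf_eq] at hz
  obtain ⟨x, hxX, hx⟩ := hz
  have hproj : ∀ i : Fin k, cdk k (proj k z) i = (z (i:ℕ) : ℝ) := by
    intro i
    simp only [cdk, proj]
    rw [if_pos i.2]
  refine ⟨?_, ?_⟩
  · intro i hi
    simp only [proj]
    rw [if_neg (by omega)]
  · refine covS X k m hm (fun i => ?_) ⟨x, hxX, fun i => ?_⟩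
    · rw [hproj i]
      exact (z (i:ℕ)).2
    · rw [hproj i]
      exact hx i

lemma cyl_close (X : Set Iinf) (k m : ℕ) (hm : 0 < m) {z : Iinf}
    (hz : z ∈ cyl k (PP X k m hm)) :
    ∃ x ∈ X, ∀ i : Fin k, |((z (i:ℕ) : ℝ)) - ((x (i:ℕ) : ℝ))| < 3 / m := by
  obtain ⟨x, hxX, hx⟩ := closeS X k m hm hz.2
  refine ⟨x, hxX, fun i => ?_⟩
  have : cdk k (proj k z) i = (z (i:ℕ) : ℝ) := by
    simp only [cdk, proj]
    rw [if_pos i.2]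
  rw [← this]
  exact hx i

/-- Distance bound on the Hilbert cube. -/
lemma rho_bound (z x : Iinf) (N : ℕ) (c : ℝ) (hc : 0 ≤ c)
    (h : ∀ i, i < N → |(z i : ℝ) - (x i : ℝ)| ≤ c) : rho z x ≤ c + (1/2)^N := by
  have habs : ∀ i : ℕ, |(z i : ℝ) - (x i : ℝ)| ≤ 1 := by
    intro i
    rw [abs_le]
    constructor
    · linarith [(z i).2.1, (x i).2.2]
    · linarith [(z i).2.2, (x i).2.1]
  set g : ℕ → ℝ := fun i => (if i < N then c else 1) / 2 ^ (i + 1) with hg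
  have hg_eq : ∀ i, g i = (if i < N then c else 1) / 2 / 2 ^ i := by
    intro i
    rw [hg]
    simp only []
    rw [pow_succ]
    ring
  have hsuma : Summable (fun i : ℕ => (max c 1) / 2 / 2 ^ i) := summable_geometric_two' _
  have hg_nonneg : ∀ i, 0 ≤ g i := by
    intro i
    rw [hg]
    simp only []
    split
    · positivity
    · positivity
  have hgle : ∀ i, g i ≤ (max c 1) / 2 / 2 ^ i := by
    intro i
    rw [hg_eq i]
    gcongr
    split
    · exact le_max_left _ _
    · exact le_max_right _ _
  have hsg : Summable g := Summable.of_nonneg_of_le hg_nonneg hgle hsuma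
  have hf_le : ∀ i : ℕ, |(z i : ℝ) - (x i : ℝ)| / 2 ^ (i + 1) ≤ g i := by
    intro i
    rw [hg]
    simp only []
    gcongr
    split
    · exact h i (by assumption)
    · exact habs i
  have hsf : Summable (fun i : ℕ => |(z i : ℝ) - (x i : ℝ)| / 2 ^ (i + 1)) :=
    Summable.of_nonneg_of_le (fun i => by positivity) hf_le hsg
  have h1 : rho z x ≤ ∑' i, g i := Summable.tsum_le_tsum hf_le hsf hsg
  have hsplit : (∑ i ∈ Finset.range N, g i) + (∑' i, g (i + N)) = ∑' i, g i :=
    Summable.sum_add_tsum_nat_add N hsg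
  have hhead : ∑ i ∈ Finset.range N, g i ≤ c := by
    have hterm : ∀ i ∈ Finset.range N, g i = c / 2 / 2 ^ i := by
      intro i hi
      rw [hg_eq i, if_pos (Finset.mem_range.1 hi)]
    rw [Finset.sum_congr rfl hterm]
    have hsc : Summable (fun i : ℕ => c / 2 / 2 ^ i) := summable_geometric_two' _
    calc ∑ i ∈ Finset.range N, c / 2 / 2 ^ i ≤ ∑' i, c / 2 / 2 ^ i :=
          Summable.sum_le_tsum _ (fun i _ => by positivity) hsc
    _ = c := tsum_geometric_two' c
  have htail : (∑' i, g (i + N)) = (1/2)^N := by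
    have hterm : ∀ i : ℕ, g (i + N) = ((1:ℝ)/2)^N / 2 / 2 ^ i := by
      intro i
      rw [hg_eq (i + N), if_neg (by omega)]
      rw [div_pow, one_pow, pow_add]
      ring
    rw [tsum_congr hterm]
    exact tsum_geometric_two' _
  calc rho z x ≤ ∑' i, g i := h1
  _ = (∑ i ∈ Finset.range N, g i) + (∑' i, g (i + N)) := hsplit.symm
  _ ≤ c + (1/2)^N := by rw [htail]; linarith

/-- Arithmetic: `3/4^j + (1/2)^j < 2/j` for `j ≥ 1`. -/
lemma arith_bound {j : ℕ} (hj : 1 ≤ j) :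
    3 / ((4:ℝ)^j) + (1/2)^j < 2 / j := by
  have key : ∀ n : ℕ, 1 ≤ n → 3 * n + n * 2^n < 2 * 4^n := by
    intro n hn
    induction n with
    | zero => omega
    | succ l ih =>
      rcases Nat.eq_or_lt_of_le hn with h | h
      · simp [← h]
      · have hl : 1 ≤ l := by omega
        have ihl := ih hl
        have h1 : l + 1 ≤ 2 * l := by omega
        have h2 : (l+1) * 2^(l+1) ≤ 4 * (l * 2^l) := by
          rw [pow_succ]
          calc (l+1) * (2^l * 2) ≤ (2*l) * (2^l * 2) := by
                apply Nat.mul_le_mul_right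
                exact h1
          _ = 4 * (l * 2^l) := by ring
        have h3 : 2 * 4^(l+1) = 8 * 4^l := by rw [pow_succ]; ring
        have h4 : (1:ℕ) ≤ 2^l := Nat.one_le_two_pow
        calc 3 * (l+1) + (l+1) * 2^(l+1) ≤ 3*l + 3 + 4 * (l * 2^l) := by omega
        _ < 8 * 4^l := by nlinarith [ihl]
        _ = 2 * 4^(l+1) := h3.symm
  have hkey := key j hj
  have hj' : (0:ℝ) < j := by exact_mod_cast hj
  have h4 : (0:ℝ) < 4^j := by positivity
  have hR : 3 * (j:ℝ) + j * 2^j < 2 * 4^j := by exact_mod_cast hkey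
  rw [div_add' _ _ _ (ne_of_gt h4), div_lt_div_iff₀ h4 hj']
  have h2j : ((1:ℝ)/2)^j * 4^j = 2^j := by
    rw [div_pow, one_pow, div_mul_eq_mul_div, one_mul,
      div_eq_iff (by positivity : (2:ℝ)^j ≠ 0), ← mul_pow]
    norm_num
  calc (3 + (1/2)^j * 4^j) * (j:ℝ) = 3 * j + j * ((1/2)^j * 4^j) := by ring
  _ = 3 * j + j * 2^j := by rw [h2j]
  _ < 2 * 4^j := hR

end KuhnGlue

/-- For every nonempty compact `X ⊆ I^∞` there are a strictly increasing
sequence `(n_j)` with `n_1 = 1` and compact polyhedra `P_j ⊆ I^{n_j}` (each the polyhedron of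
a finite geometric simplicial complex in `ℝ^{n_j}`) such that
(1) `X ⊆ int_{I^∞}(P_j × I^∞_{n_j})` and `P_j × I^∞_{n_j} ⊆ N(X, 2/j)` for all `j ≥ 1`, and
(2) `p_{n_{j-1}}^{n_j}(P_j) ⊆ int_{I^{n_{j-1}}}(P_{j-1})` for all `j ≥ 2`. -/
theorem exists_polyhedral_neighborhood_sequence
    (X : Set Iinf) (hXne : X.Nonempty) (hXc : IsCompact X) :
    ∃ n : ℕ → ℕ, StrictMono n ∧ n 1 = 1 ∧
      ∃ P : ℕ → Set Iinf,
        (∀ j : ℕ, 1 ≤ j → IsCompact (P j) ∧ P j ⊆ cubeFin (n j) ∧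
          ∃ K : Geometry.SimplicialComplex ℝ (Fin (n j) → ℝ), K.faces.Finite ∧
            (fun (x : Iinf) (i : Fin (n j)) => (x i : ℝ)) '' P j = K.space) ∧
        (∀ j : ℕ, 1 ≤ j →
          X ⊆ interior (cyl (n j) (P j)) ∧ cyl (n j) (P j) ⊆ nbhd X (2 / (j : ℝ))) ∧
        (∀ j : ℕ, 2 ≤ j →
          proj (n (j - 1)) '' P j ⊆ relInterior (n (j - 1)) (P (j - 1))) := by
  classical
  refine ⟨fun j => j, strictMono_id, rfl,
    fun j => KuhnGlue.PP X j (4^j) (by positivity), ?_, ?_, ?_⟩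
  · -- compactness, inclusion, polyhedron
    intro j hj
    refine ⟨KuhnGlue.PP_isCompact X j (4^j) (by positivity), fun y hy => hy.1,
      KuhnCore.gridComplex j (4^j) (by positivity) (KuhnGlue.Sset X j (4^j)),
      KuhnCore.gridComplex_faces_finite _ (KuhnGlue.Sset_finite X j (4^j) (by positivity)), ?_⟩
    exact KuhnGlue.PP_image X j (4^j) (by positivity)
  · -- interior and neighborhood conditions
    intro j hj
    have hmpos : 0 < 4^j := by positivity
    constructor
    · have hsub : KuhnGlue.UU X j ((1:ℝ)/(4^j : ℕ)) ⊆ cyl j (KuhnGlue.PP X j (4^j) hmpos) :=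
        KuhnGlue.UU_subset_cyl X j (4^j) hmpos
      have hXU : X ⊆ KuhnGlue.UU X j ((1:ℝ)/(4^j : ℕ)) := fun x hx =>
        KuhnGlue.mem_UU_self X j (by positivity) hx
      exact fun x hx => (interior_maximal hsub (KuhnGlue.UU_open X j _)) (hXU hx)
    · intro z hz
      obtain ⟨x, hxX, hx⟩ := KuhnGlue.cyl_close X j (4^j) hmpos hz
      refine ⟨x, hxX, ?_⟩
      have hb : rho z x ≤ 3/((4^j : ℕ) : ℝ) + (1/2)^j := by
        refine KuhnGlue.rho_bound z x j _ (by positivity) ?_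
        intro i hi
        exact (hx ⟨i, hi⟩).le
      have hm4 : ((4^j : ℕ) : ℝ) = (4:ℝ)^j := by push_cast; ring
      calc rho z x ≤ 3/((4^j : ℕ) : ℝ) + (1/2)^j := hb
      _ = 3/(4:ℝ)^j + (1/2)^j := by rw [hm4]
      _ < 2/j := KuhnGlue.arith_bound hj
  · -- nested interiors
    intro j hj
    have hl1 : 1 ≤ j - 1 := by omega
    have hlj : (j - 1) + 1 = j := by omega
    have hmpos : 0 < 4^j := by positivity
    have hm'pos : 0 < 4^(j-1) := by positivity
    have hsmall : (3:ℝ)/((4^j : ℕ):ℝ) < 1/((4^(j-1) : ℕ):ℝ) := by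
      have h1 : ((4^j : ℕ):ℝ) = 4 * ((4^(j-1) : ℕ):ℝ) := by
        have h2 : (4:ℕ)^j = 4 * 4^(j-1) := by
          conv_lhs => rw [← hlj]
          rw [pow_succ]
          ring
        rw [h2]
        push_cast
        ring
      rw [div_lt_div_iff₀ (by positivity) (by positivity), h1]
      have : (0:ℝ) < ((4^(j-1) : ℕ):ℝ) := by positivity
      nlinarith
    rintro q ⟨p, hp, rfl⟩
    obtain ⟨x, hxX, hx⟩ := KuhnGlue.closeS X j (4^j) hmpos hp.2
    refine ⟨?_, KuhnGlue.UU X (j-1) ((1:ℝ)/(4^(j-1) : ℕ)), KuhnGlue.UU_open _ _ _, ?_, ?_⟩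
    · intro i hi
      have hi' : j - 1 ≤ i := hi
      simp only [proj]
      rw [if_neg (by omega)]
    · refine Set.mem_biUnion hxX ?_
      intro i
      have hi2 : (i:ℕ) < j - 1 := i.2
      have hlt : (i:ℕ) < j := by omega
      have heq : ((proj (j-1) p) (i:ℕ) : ℝ) = (p (i:ℕ) : ℝ) := by
        simp only [proj]
        rw [if_pos i.2]
      rw [heq]
      have h3 : |(p (i:ℕ) : ℝ) - (x (i:ℕ) : ℝ)| < 3/((4^j : ℕ):ℝ) := hx ⟨i, hlt⟩
      exact lt_trans h3 hsmall
    · rintro w ⟨hwU, hwcube⟩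
      simp only [KuhnGlue.UU, Set.mem_iUnion, Set.mem_setOf_eq] at hwU
      obtain ⟨x', hx'X, hx'⟩ := hwU
      exact ⟨hwcube, KuhnGlue.covS X (j-1) (4^(j-1)) hm'pos (fun i => (w (i:ℕ)).2)
        ⟨x', hx'X, hx'⟩⟩
end
end

section
/- Let X ⊆ I^∞ be compact and nonempty, (n_j) a strictly increasing sequence in ℕ, and (P_j) a sequence of compact subsets P_j ⊆ I^{n_j} such that for all j, X ⊆ int_{I^∞}(P_j × I^∞_{n_j}) ⊆ P_j × I^∞_{n_j} ⊆ N(X, 2/j), and p_{n_j}^{n_{j+1}}(P_{j+1}) ⊆ int_{I^{n_j}}(P_j). Then: (1) for each j ∈ ℕ, P_{j+1} × I^∞_{n_{j+1}} ⊆ int_{I^∞}(P_j × I^∞_{n_j}); and (2) X = ⋂_{j∈ℕ} (P_j × I^∞_{n_j}). -/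
open Set Filter Topology

noncomputable section

set_option maxHeartbeats 1000000 in
lemma summable_aux (x y : Iinf) :
    Summable (fun i : ℕ => |((x i : ℝ)) - (y i : ℝ)| / 2 ^ (i + 1)) := by
  refine Summable.of_nonneg_of_le
    (fun i => div_nonneg (abs_nonneg _) (le_of_lt (pow_pos two_pos _)))
    (fun i => ?_) summable_geometric_two
  have h1 : |((x i : ℝ)) - (y i : ℝ)| ≤ 1 := by
    rw [abs_sub_le_iff]
    constructor <;> nlinarith [(x i).2.1, (x i).2.2, (y i).2.1, (y i).2.2]
  have h3 : (2:ℝ)^i ≤ 2^(i+1) := by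
    apply pow_le_pow_right₀ <;> norm_num
  rw [one_div, inv_pow, ← one_div]
  calc |((x i : ℝ)) - (y i : ℝ)| / 2 ^ (i + 1) ≤ 1 / 2 ^ (i+1) := by gcongr
    _ ≤ 1 / 2 ^ i := by gcongr
    _ = 1 / (2:ℝ)^i := rfl

lemma coord_le_rho (x y : Iinf) (i : ℕ) :
    |((x i : ℝ)) - (y i : ℝ)| ≤ 2 ^ (i + 1) * rho x y := by
  have h := Summable.le_tsum (summable_aux x y) i
    (fun k _ => div_nonneg (abs_nonneg _) (le_of_lt (pow_pos two_pos _)))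
  rw [div_le_iff₀ (by positivity)] at h
  rw [mul_comm] at h
  exact h

lemma continuous_proj (k : ℕ) : Continuous (proj k) := by
  unfold proj
  refine continuous_pi fun i => ?_
  by_cases h : i < k
  · simpa [h] using continuous_apply i
  · simpa [h] using continuous_const

lemma proj_mem_cubeFin (k : ℕ) (x : Iinf) : proj k x ∈ cubeFin k := by
  intro i hi
  simp [proj, Nat.not_lt.mpr hi]

/-- Given nonempty compact `X ⊆ I^∞`, a strictly increasing sequence `(n_j)`,
and compact `P_j ⊆ I^{n_j}` with `X ⊆ int_{I^∞}(P_j × I^∞_{n_j})`,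
`P_j × I^∞_{n_j} ⊆ N(X, 2/j)` and `p_{n_j}^{n_{j+1}}(P_{j+1}) ⊆ int_{I^{n_j}}(P_j)`:
(1) `P_{j+1} × I^∞_{n_{j+1}} ⊆ int_{I^∞}(P_j × I^∞_{n_j})` for every `j`, and
(2) `X = ⋂_j (P_j × I^∞_{n_j})`. -/
theorem cylinder_chain_and_intersection
    (X : Set Iinf) (hXne : X.Nonempty) (hXc : IsCompact X)
    (n : ℕ → ℕ) (hn : StrictMono n)
    (P : ℕ → Set Iinf) (hPc : ∀ j : ℕ, 1 ≤ j → IsCompact (P j))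
    (hPcube : ∀ j : ℕ, 1 ≤ j → P j ⊆ cubeFin (n j))
    (hint : ∀ j : ℕ, 1 ≤ j → X ⊆ interior (cyl (n j) (P j)))
    (hnbhd : ∀ j : ℕ, 1 ≤ j → cyl (n j) (P j) ⊆ nbhd X (2 / (j : ℝ)))
    (hchain : ∀ j : ℕ, 1 ≤ j → proj (n j) '' P (j + 1) ⊆ relInterior (n j) (P j)) :
    (∀ j : ℕ, 1 ≤ j → cyl (n (j + 1)) (P (j + 1)) ⊆ interior (cyl (n j) (P j))) ∧
      X = ⋂ j ∈ Set.Ici 1, cyl (n j) (P j) := by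
  constructor
  · -- part (1)
    intro j hj x hx
    have hle : n j ≤ n (j + 1) := (hn (Nat.lt_succ_self j)).le
    have hproj : proj (n j) x = proj (n j) (proj (n (j + 1)) x) := by
      funext i
      by_cases h : i < n j
      · simp [proj, h, h.trans_le hle]
      · simp [proj, h]
    have hmem : proj (n j) x ∈ relInterior (n j) (P j) := by
      apply hchain j hj
      rw [hproj]
      exact ⟨_, hx, rfl⟩
    obtain ⟨-, U, hUo, hxU, hUsub⟩ := hmem
    rw [mem_interior]
    refine ⟨proj (n j) ⁻¹' U, ?_, hUo.preimage (continuous_proj _), hxU⟩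
    intro y hy
    exact hUsub ⟨hy, proj_mem_cubeFin _ _⟩
  · -- part (2)
    apply Subset.antisymm
    · intro x hx
      simp only [mem_iInter]
      intro j hj
      exact interior_subset (hint j hj hx)
    · intro x hx
      simp only [mem_iInter] at hx
      have hx' : ∀ j : ℕ, 1 ≤ j → ∃ a ∈ X, rho x a < 2 / j :=
        fun j hj => hnbhd j hj (hx j hj)
      classical
      set a : ℕ → Iinf := fun j => if h : 1 ≤ j then (hx' j h).choose else hXne.choose with ha
      have haX : ∀ j : ℕ, 1 ≤ j → a j ∈ X ∧ rho x (a j) < 2 / j := by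
        intro j hj
        simp only [ha, dif_pos hj]
        exact ⟨(hx' j hj).choose_spec.1, (hx' j hj).choose_spec.2⟩
      have htend : Tendsto a atTop (𝓝 x) := by
        rw [tendsto_pi_nhds]
        intro i
        rw [tendsto_subtype_rng]
        rw [tendsto_iff_dist_tendsto_zero]
        have hb : Tendsto (fun j : ℕ => 2 ^ (i + 1) * (2 / (j : ℝ))) atTop (𝓝 0) := by
          have h0 := tendsto_const_div_atTop_nhds_zero_nat (2:ℝ)
          simpa using h0.const_mul ((2:ℝ) ^ (i + 1))
        apply squeeze_zero' (Eventually.of_forall fun j => dist_nonneg) _ hb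
        filter_upwards [eventually_ge_atTop 1] with j hj
        rw [Real.dist_eq]
        calc |((a j i : ℝ)) - (x i : ℝ)| = |((x i : ℝ)) - (a j i : ℝ)| := abs_sub_comm _ _
          _ ≤ 2 ^ (i + 1) * rho x (a j) := coord_le_rho _ _ _
          _ ≤ 2 ^ (i + 1) * (2 / j) := by
              have h1 := (haX j hj).2
              have h2 : (0:ℝ) ≤ 2 ^ (i + 1) := le_of_lt (pow_pos two_pos _)
              exact mul_le_mul_of_nonneg_left h1.le h2
      exact hXc.isClosed.mem_of_tendsto htend
        (by filter_upwards [eventually_ge_atTop 1] with j hj; exact (haX j hj).1)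
end
end
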